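/- arXiv:2103.04688 — 11 statements merged into one kernel-verified Lean document; each statement's English description precedes it below -/
import Mathlib

section
/- Let γ, a, ρ, β, σ be real numbers with γ ≠ 1, γ + a ≠ 0 and σ ≠ 0, and suppose D := ((1−γ−a)² ρ²)/((γ+a)(1−γ)) + 1 − a/(1−γ) ≠ 0. Set k := 1/D and c := ((1−γ−a) β ρ k)/((γ+a)(1−γ)σ). Then −(1/2)(γ+a)(1−γ)σ² c² + (1/2)β² k (k − 1 − a k/(1−γ)) + (1−γ−a) σ β ρ k c = 0. -/
/-- Under the choice `k = 1/D` of the exponent in the value-function ansatz, the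
coefficient of the quadratic term `(g_y/g)²` in the reduced robust HJB equation
vanishes. -/
theorem quadratic_coefficient_vanishes
    (γ a ρ β σ : ℝ) (hγ : γ ≠ 1) (hγa : γ + a ≠ 0) (hσ : σ ≠ 0)
    (D : ℝ)
    (hD : D = ((1 - γ - a) ^ 2 * ρ ^ 2) / ((γ + a) * (1 - γ)) + 1 - a / (1 - γ))
    (hD0 : D ≠ 0)
    (k c : ℝ) (hk : k = 1 / D)
    (hc : c = ((1 - γ - a) * β * ρ * k) / ((γ + a) * (1 - γ) * σ)) :
    -(1 / 2) * (γ + a) * (1 - γ) * σ ^ 2 * c ^ 2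
      + (1 / 2) * β ^ 2 * k * (k - 1 - a * k / (1 - γ))
      + (1 - γ - a) * σ * β * ρ * k * c = 0 := by
  have h1 : (1 : ℝ) - γ ≠ 0 := sub_ne_zero.mpr (Ne.symm hγ)
  have hE : (γ + a) * (1 - γ) ≠ 0 := mul_ne_zero hγa h1
  have hkD : k * D = 1 := by rw [hk]; field_simp
  have hDE : D * ((γ + a) * (1 - γ)) =
      (1 - γ - a) ^ 2 * ρ ^ 2 + (γ + a) * (1 - γ) - a * (γ + a) := by
    rw [hD]; field_simp
  have key : k * ((1 - γ - a) ^ 2 * ρ ^ 2 + (γ + a) * (1 - γ) - a * (γ + a))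
      = (γ + a) * (1 - γ) := by
    calc k * ((1 - γ - a) ^ 2 * ρ ^ 2 + (γ + a) * (1 - γ) - a * (γ + a))
        = (k * D) * ((γ + a) * (1 - γ)) := by rw [← hDE]; ring
      _ = (γ + a) * (1 - γ) := by rw [hkD]; ring
  have hc2 : (γ + a) * (1 - γ) * σ * c = (1 - γ - a) * β * ρ * k := by
    rw [hc]; field_simp
  have hu : (1 - γ) * (a * k / (1 - γ)) = a * k := by field_simp
  have H : (-(1 / 2) * (γ + a) * (1 - γ) * σ ^ 2 * c ^ 2
      + (1 / 2) * β ^ 2 * k * (k - 1 - a * k / (1 - γ))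
      + (1 - γ - a) * σ * β * ρ * k * c) * ((γ + a) * (1 - γ)) = 0 := by
    linear_combination (1 / 2) * β ^ 2 * k * key
      - (1 / 2) * ((γ + a) * (1 - γ) * σ * c - (1 - γ - a) * β * ρ * k) * hc2
      - (1 / 2) * β ^ 2 * k * (γ + a) * hu
  exact (mul_eq_zero.mp H).resolve_right hE
end

section
/- Let γ, a, ρ be real numbers with γ ≠ 1 and γ + a ≠ 0, and suppose D := ((1−γ−a)² ρ²)/((γ+a)(1−γ)) + 1 − a/(1−γ) ≠ 0. Let ψ be a real number with ψ ∉ {0, 1}, set φ := 1/ψ, θ := (1−γ)/(1−φ), k := 1/D and ζ := −k/θ. Then ζψ + 1 = 0 if and only if ψ = 2 − γ − a + ((1−γ−a)²/(γ+a)) ρ². -/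
/-- The nonlinearity exponent `ζψ + 1` in the PDE for `g` vanishes exactly when the
elasticity of intertemporal substitution satisfies
`ψ = 2 − γ − a + ((1−γ−a)²/(γ+a)) ρ²`. -/
theorem nonlinearity_vanishes_iff
    (γ a ρ : ℝ) (hγ : γ ≠ 1) (hγa : γ + a ≠ 0)
    (D : ℝ)
    (hD : D = ((1 - γ - a) ^ 2 * ρ ^ 2) / ((γ + a) * (1 - γ)) + 1 - a / (1 - γ))
    (hD0 : D ≠ 0)
    (ψ : ℝ) (hψ0 : ψ ≠ 0) (hψ1 : ψ ≠ 1)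
    (φ θ k ζ : ℝ)
    (hφ : φ = 1 / ψ) (hθ : θ = (1 - γ) / (1 - φ)) (hk : k = 1 / D) (hζ : ζ = -k / θ) :
    ζ * ψ + 1 = 0 ↔ ψ = 2 - γ - a + ((1 - γ - a) ^ 2 / (γ + a)) * ρ ^ 2 := by
  have hγ' : (1:ℝ) - γ ≠ 0 := sub_ne_zero.mpr (Ne.symm hγ)
  have h1φ : (1:ℝ) - φ ≠ 0 := by
    rw [hφ]
    intro h
    apply hψ1
    have : (1:ℝ)/ψ = 1 := by linarith
    field_simp at this
    linarith
  have hθ0 : θ ≠ 0 := by rw [hθ]; exact div_ne_zero hγ' h1φ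
  have step1 : ζ * ψ + 1 = 0 ↔ k * ψ = θ := by
    rw [hζ]
    field_simp
    constructor <;> intro h <;> linarith
  have h1φ' : (1:ℝ) - 1/ψ ≠ 0 := hφ ▸ h1φ
  have key : (2 - γ - a + (1 - γ - a) ^ 2 / (γ + a) * ρ ^ 2 : ℝ) = 1 + D * (1 - γ) := by
    rw [hD]; field_simp; ring
  rw [step1, hθ, hφ, hk, key]
  rw [div_mul_eq_mul_div, div_eq_div_iff hD0 h1φ']
  have hmul : ψ * (1 - 1/ψ) = ψ - 1 := by field_simp
  rw [show (1:ℝ) * ψ * (1 - 1/ψ) = ψ * (1 - 1/ψ) by ring, hmul]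
  constructor <;> intro h <;> nlinarith [mul_comm D (1-γ)]
end

section
/- Fix real constants b > 0, κ > 0, β̄ > 0, set d := √(κ² + 2bβ̄²), and fix s ∈ ℝ. Define B(t) := 2b(e^{d(s−t)} − 1)/((κ + d)e^{d(s−t)} − κ + d) for t ∈ ℝ. Then B(s) = 0, the denominator (κ + d)e^{d(s−t)} − κ + d is strictly positive for every t ≤ s, and for every t ≤ s the function B is differentiable at t with B′(t) = κ B(t) + (1/2) β̄² B(t)² − b. -/
/-- The explicit function `B(t) = 2b(e^{d(s−t)} − 1)/((κ+d)e^{d(s−t)} − κ + d)` with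
`d = √(κ² + 2bβ̄²)` solves the Riccati ODE `B′ = κB + ½β̄²B² − b` with terminal
condition `B(s) = 0`, and its denominator is strictly positive for `t ≤ s`. -/
theorem riccati_B_solution
    (b κ β : ℝ) (hb : 0 < b) (hκ : 0 < κ) (hβ : 0 < β)
    (d : ℝ) (hd : d = Real.sqrt (κ ^ 2 + 2 * b * β ^ 2))
    (s : ℝ) (B : ℝ → ℝ)
    (hB : ∀ t : ℝ, B t = 2 * b * (Real.exp (d * (s - t)) - 1)
      / ((κ + d) * Real.exp (d * (s - t)) - κ + d)) :
    B s = 0 ∧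
    (∀ t : ℝ, t ≤ s → 0 < (κ + d) * Real.exp (d * (s - t)) - κ + d) ∧
    (∀ t : ℝ, t ≤ s →
      HasDerivAt B (κ * B t + (1 / 2) * β ^ 2 * (B t) ^ 2 - b) t) := by
  have harg : (0:ℝ) < κ ^ 2 + 2 * b * β ^ 2 := by positivity
  have hdpos : 0 < d := by rw [hd]; exact Real.sqrt_pos.mpr harg
  have hd2 : d ^ 2 = κ ^ 2 + 2 * b * β ^ 2 := by
    rw [hd, Real.sq_sqrt harg.le]
  have hden : ∀ t : ℝ, t ≤ s → 0 < (κ + d) * Real.exp (d * (s - t)) - κ + d := by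
    intro t ht
    have hE : (1:ℝ) ≤ Real.exp (d * (s - t)) :=
      Real.one_le_exp (by nlinarith)
    nlinarith
  refine ⟨by simp [hB s], hden, ?_⟩
  intro t ht
  set E : ℝ := Real.exp (d * (s - t)) with hEdef
  have hN := hden t ht
  have hNne : (κ + d) * E - κ + d ≠ 0 := ne_of_gt hN
  have hE : HasDerivAt (fun u => Real.exp (d * (s - u))) (E * (d * (0 - 1))) t := by
    exact (((hasDerivAt_const t s).sub (hasDerivAt_id t)).const_mul d).exp
  have hf : HasDerivAt (fun u => 2 * b * (Real.exp (d * (s - u)) - 1))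
      (2 * b * (E * (d * (0 - 1)))) t := (hE.sub_const 1).const_mul (2 * b)
  have hg : HasDerivAt (fun u => (κ + d) * Real.exp (d * (s - u)) - κ + d)
      ((κ + d) * (E * (d * (0 - 1))) - 0 + 0) t := by
    exact (((hE.const_mul (κ + d)).sub (hasDerivAt_const t κ)).add (hasDerivAt_const t d))
  have hdiv := hf.div hg hNne
  have hBeq : B = fun u => 2 * b * (Real.exp (d * (s - u)) - 1)
      / ((κ + d) * Real.exp (d * (s - u)) - κ + d) := funext hB
  rw [hBeq]
  convert hdiv using 1
  iterate 3 rfl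
  have hβ2 : β ^ 2 = (d ^ 2 - κ ^ 2) / (2 * b) := by
    field_simp
    linarith
  rw [hβ2]
  simp only [← hEdef]
  generalize hNd : (κ + d) * E - κ + d = N at hNne ⊢
  field_simp
  rw [← hNd]
  ring
end

section
/- Fix real constants b > 0, κ > 0, β̄ > 0, ν > 0, c₀ ∈ ℝ, set d := √(κ² + 2bβ̄²), and fix s ∈ ℝ. Define B(t) := 2b(e^{d(s−t)} − 1)/((κ + d)e^{d(s−t)} − κ + d) and A(t) := (4bν/(κ² − d²))·[ln((κ+d)e^{ds} − (κ−d)e^{dt}) − ln(2d) − (1/2)((κ+d)s − (κ−d)t)] + c₀(s − t) for t ≤ s. Then A(s) = 0, the argument (κ+d)e^{ds} − (κ−d)e^{dt} of the logarithm is strictly positive for every t ≤ s, and for every t ≤ s the function A is differentiable at t with A′(t) = ν B(t) − c₀. -/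
/-- The explicit function
`A(t) = (4bν/(κ²−d²))[ln((κ+d)e^{ds} − (κ−d)e^{dt}) − ln(2d) − ½((κ+d)s − (κ−d)t)] + c₀(s−t)`
solves the ODE `A′(t) = νB(t) − c₀` with terminal condition `A(s) = 0`, and the
argument of the logarithm is strictly positive for `t ≤ s`. -/
theorem ode_A_solution
    (b κ β ν c₀ : ℝ) (hb : 0 < b) (hκ : 0 < κ) (hβ : 0 < β) (hν : 0 < ν)
    (d : ℝ) (hd : d = Real.sqrt (κ ^ 2 + 2 * b * β ^ 2))
    (s : ℝ) (B A : ℝ → ℝ)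
    (hB : ∀ t : ℝ, B t = 2 * b * (Real.exp (d * (s - t)) - 1)
      / ((κ + d) * Real.exp (d * (s - t)) - κ + d))
    (hA : ∀ t : ℝ, A t = (4 * b * ν / (κ ^ 2 - d ^ 2)) *
        (Real.log ((κ + d) * Real.exp (d * s) - (κ - d) * Real.exp (d * t))
          - Real.log (2 * d) - (1 / 2) * ((κ + d) * s - (κ - d) * t))
      + c₀ * (s - t)) :
    A s = 0 ∧
    (∀ t : ℝ, t ≤ s → 0 < (κ + d) * Real.exp (d * s) - (κ - d) * Real.exp (d * t)) ∧
    (∀ t : ℝ, t ≤ s → HasDerivAt A (ν * B t - c₀) t) := by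
  have hd2 : d ^ 2 = κ ^ 2 + 2 * b * β ^ 2 := by
    rw [hd, Real.sq_sqrt (by positivity)]
  have hκd : κ < d := by
    rw [hd]
    exact (Real.lt_sqrt hκ.le).mpr (by nlinarith [mul_pos hb (pow_pos hβ 2)])
  have hdpos : 0 < d := hκ.trans hκd
  have hDpos : ∀ t : ℝ, 0 < (κ + d) * Real.exp (d * s) - (κ - d) * Real.exp (d * t) := by
    intro t
    have h1 : 0 < (κ + d) * Real.exp (d * s) := by positivity
    have h2 : (κ - d) * Real.exp (d * t) < 0 :=
      mul_neg_of_neg_of_pos (by linarith) (Real.exp_pos _)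
    linarith
  refine ⟨?_, fun t _ => hDpos t, ?_⟩
  · rw [hA]
    have h : (κ + d) * Real.exp (d * s) - (κ - d) * Real.exp (d * s)
        = 2 * d * Real.exp (d * s) := by ring
    rw [h, Real.log_mul (by positivity) (Real.exp_ne_zero _), Real.log_exp]
    ring
  · intro t hts
    have hAfun : A = fun t => (4 * b * ν / (κ ^ 2 - d ^ 2)) *
        (Real.log ((κ + d) * Real.exp (d * s) - (κ - d) * Real.exp (d * t))
          - Real.log (2 * d) - (1 / 2) * ((κ + d) * s - (κ - d) * t))
      + c₀ * (s - t) := funext hA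
    have he : HasDerivAt (fun t : ℝ => Real.exp (d * t)) (d * Real.exp (d * t)) t := by
      simpa [mul_comm] using ((hasDerivAt_id t).const_mul d).exp
    have hg : HasDerivAt (fun t : ℝ => (κ + d) * Real.exp (d * s) - (κ - d) * Real.exp (d * t))
        (-((κ - d) * (d * Real.exp (d * t)))) t := by
      simpa using (he.const_mul (κ - d)).const_sub ((κ + d) * Real.exp (d * s))
    have hlog := hg.log (ne_of_gt (hDpos t))
    have hlin : HasDerivAt (fun t : ℝ => (1 / 2) * ((κ + d) * s - (κ - d) * t))
        ((1 / 2) * (-(κ - d))) t := by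
      simpa using (((hasDerivAt_id t).const_mul (κ - d)).const_sub ((κ + d) * s)).const_mul
        (1 / 2 : ℝ)
    have hct : HasDerivAt (fun t : ℝ => c₀ * (s - t)) (c₀ * (-1)) t := by
      simpa using ((hasDerivAt_id t).const_sub s).const_mul c₀
    have hfull := (((hlog.sub_const (Real.log (2 * d))).sub hlin).const_mul
      (4 * b * ν / (κ ^ 2 - d ^ 2))).add hct
    rw [hAfun]
    convert hfull using 1
    case e'_4 => rfl
    case e'_5 => rfl
    case e'_8 => rfl
    rw [hB]
    have hexp : Real.exp (d * (s - t)) = Real.exp (d * s) / Real.exp (d * t) := by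
      rw [← Real.exp_sub]; ring_nf
    have hDne : ((κ + d) * Real.exp (d * s) - (κ - d) * Real.exp (d * t)) ≠ 0 :=
      ne_of_gt (hDpos t)
    have hdenB : (κ + d) * Real.exp (d * (s - t)) - κ + d
        = ((κ + d) * Real.exp (d * s) - (κ - d) * Real.exp (d * t)) / Real.exp (d * t) := by
      rw [hexp]; field_simp; ring
    have hne : κ ^ 2 - d ^ 2 ≠ 0 := by nlinarith
    rw [hdenB, hexp]
    have hEt := Real.exp_ne_zero (d * t)
    generalize hDD : (κ + d) * Real.exp (d * s) - (κ - d) * Real.exp (d * t) = D at hDne ⊢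
    field_simp
    subst hDD
    ring
end

section
/- Fix real constants b > 0, κ > 0, β̄ > 0, set d := √(κ² + 2bβ̄²), and for t ≤ s define B(t,s) := 2b(e^{d(s−t)} − 1)/((κ + d)e^{d(s−t)} − κ + d). Then for all real t ≤ s: 0 ≤ B(t,s) ≤ b/κ and B(t,s) ≤ b(s − t). -/
/-- Key elementary inequality: `2(e^x - 1) ≤ x (e^x + 1)` for `x ≥ 0`. -/
lemma riccati_key_ineq : ∀ x : ℝ, 0 ≤ x → 2 * (Real.exp x - 1) ≤ x * (Real.exp x + 1) := by
  intro x hx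
  set f : ℝ → ℝ := fun y => y * (Real.exp y + 1) - 2 * (Real.exp y - 1) with hf
  have hderiv : ∀ y : ℝ, HasDerivAt f (Real.exp y * (y - 1) + 1) y := by
    intro y
    have h1 : HasDerivAt (fun y : ℝ => y * (Real.exp y + 1))
        (1 * (Real.exp y + 1) + y * Real.exp y) y := by
      exact (hasDerivAt_id y).mul ((Real.hasDerivAt_exp y).add_const 1)
    have h2 : HasDerivAt (fun y : ℝ => 2 * (Real.exp y - 1)) (2 * Real.exp y) y := by
      exact ((Real.hasDerivAt_exp y).sub_const 1).const_mul 2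
    have := h1.sub h2
    exact this.congr_deriv (by ring)
  have hderiv_nonneg : ∀ y : ℝ, 0 ≤ Real.exp y * (y - 1) + 1 := by
    intro y
    have h1 : 1 - y ≤ Real.exp (-y) := by
      have := Real.add_one_le_exp (-y); linarith
    have h2 : (1 - y) * Real.exp y ≤ Real.exp (-y) * Real.exp y :=
      mul_le_mul_of_nonneg_right h1 (Real.exp_pos y).le
    rw [← Real.exp_add] at h2
    simp at h2
    nlinarith [Real.exp_pos y]
  have hmono : MonotoneOn f (Set.Ici (0 : ℝ)) := by
    apply monotoneOn_of_deriv_nonneg (convex_Ici 0)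
    · exact (Continuous.mul continuous_id ((Real.continuous_exp).add continuous_const)).sub
        (continuous_const.mul ((Real.continuous_exp).sub continuous_const)) |>.continuousOn
    · intro y _
      exact (hderiv y).differentiableAt.differentiableWithinAt
    · intro y _
      rw [(hderiv y).deriv]
      exact hderiv_nonneg y
  have h0 : f 0 ≤ f x := hmono (Set.self_mem_Ici) hx hx
  simp [hf, Real.exp_zero] at h0
  linarith

/-- Uniform bounds for the explicit Riccati solution `B(t,s)`:
`0 ≤ B(t,s) ≤ b/κ` and `B(t,s) ≤ b(s−t)` for all `t ≤ s`. -/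
theorem riccati_B_bounds
    (b κ β : ℝ) (hb : 0 < b) (hκ : 0 < κ) (hβ : 0 < β)
    (d : ℝ) (hd : d = Real.sqrt (κ ^ 2 + 2 * b * β ^ 2))
    (B : ℝ → ℝ → ℝ)
    (hB : ∀ t s : ℝ, t ≤ s → B t s = 2 * b * (Real.exp (d * (s - t)) - 1)
      / ((κ + d) * Real.exp (d * (s - t)) - κ + d)) :
    ∀ t s : ℝ, t ≤ s →
      0 ≤ B t s ∧ B t s ≤ b / κ ∧ B t s ≤ b * (s - t) := by
  have hdκ : κ ≤ d := by
    rw [hd]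
    have : κ = Real.sqrt (κ ^ 2) := by rw [Real.sqrt_sq hκ.le]
    rw [this]
    apply Real.sqrt_le_sqrt
    nlinarith
  have hdpos : 0 < d := lt_of_lt_of_le hκ hdκ
  intro t s hts
  have hst : 0 ≤ s - t := by linarith
  set x := d * (s - t) with hx
  have hx0 : 0 ≤ x := mul_nonneg hdpos.le hst
  set E := Real.exp x with hE
  have hE1 : 1 ≤ E := Real.one_le_exp hx0
  have hD : (κ + d) * E - κ + d = (κ + d) * (E - 1) + 2 * d := by ring
  have hDpos : 0 < (κ + d) * E - κ + d := by nlinarith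
  have hkey : 2 * (E - 1) ≤ x * (E + 1) := riccati_key_ineq x hx0
  have hEE : Real.exp (d * (s - t)) = E := rfl
  rw [hB t s hts, hEE]
  refine ⟨?_, ?_, ?_⟩
  · apply div_nonneg _ hDpos.le
    nlinarith
  · rw [div_le_div_iff₀ hDpos hκ]
    nlinarith [mul_nonneg (mul_nonneg hb.le (sub_nonneg.mpr hdκ)) (sub_nonneg.mpr hE1),
      mul_pos hb hdpos]
  · rw [div_le_iff₀ hDpos]
    have hDge : d * (E + 1) ≤ (κ + d) * E - κ + d := by nlinarith
    calc 2 * b * (E - 1) ≤ b * (x * (E + 1)) := by nlinarith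
      _ = b * (s - t) * (d * (E + 1)) := by rw [hx]; ring
      _ ≤ b * (s - t) * ((κ + d) * E - κ + d) := by
          apply mul_le_mul_of_nonneg_left hDge (by positivity)
end

section
/- Fix real constants b > 0, κ > 0, β̄ > 0, ν > 0, c₀ ∈ ℝ, T > 0, δ > 0 and ψ ∈ ℝ, set d := √(κ² + 2bβ̄²), and for t ≤ s define B(t,s) := 2b(e^{d(s−t)} − 1)/((κ + d)e^{d(s−t)} − κ + d) and A(t,s) := (4bν/(κ² − d²))·[ln((κ+d)e^{ds} − (κ−d)e^{dt}) − ln(2d) − (1/2)((κ+d)s − (κ−d)t)] + c₀(s − t). Define g(t,y) := δ^ψ ∫_t^T e^{A(t,s) − B(t,s)y} ds for (t,y) ∈ [0,T) × [0,∞). Then g has a partial derivative in t and first and second partial derivatives in y at every (t,y) ∈ [0,T) × [0,∞), and these satisfy ∂_t g(t,y) + (c₀ − b y) g(t,y) + (ν − κ y) ∂_y g(t,y) + (1/2) β̄² y ∂_{yy} g(t,y) + δ^ψ = 0. -/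
open Real intervalIntegral MeasureTheory Set Metric Topology Filter

noncomputable def Bb (b κ d t s : ℝ) : ℝ :=
  2 * b * (Real.exp (d * (s - t)) - 1) / ((κ + d) * Real.exp (d * (s - t)) - κ + d)

noncomputable def Aa (b κ ν c₀ d t s : ℝ) : ℝ :=
  (4 * b * ν / (κ ^ 2 - d ^ 2)) *
      (Real.log ((κ + d) * Real.exp (d * s) - (κ - d) * Real.exp (d * t))
        - Real.log (2 * d) - (1 / 2) * ((κ + d) * s - (κ - d) * t))
    + c₀ * (s - t)

section aux
variable {b κ β ν c₀ d : ℝ}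

lemma den_pos (hκ : 0 < κ) (hκd : κ < d) (x : ℝ) :
    0 < (κ + d) * Real.exp x - κ + d := by
  nlinarith [Real.exp_pos x, Real.add_one_le_exp x]

lemma G_pos (hκ : 0 < κ) (hκd : κ < d) (t s : ℝ) :
    0 < (κ + d) * Real.exp (d * s) - (κ - d) * Real.exp (d * t) := by
  nlinarith [Real.exp_pos (d * s), Real.exp_pos (d * t)]

lemma Bb_eq (hκ : 0 < κ) (hκd : κ < d) (t s : ℝ) :
    Bb b κ d t s = 2 * b * (Real.exp (d * s) - Real.exp (d * t)) /
      ((κ + d) * Real.exp (d * s) - (κ - d) * Real.exp (d * t)) := by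
  unfold Bb
  rw [show d * (s - t) = d * s - d * t by ring, Real.exp_sub]
  have h1 : (κ + d) * (Real.exp (d * s) / Real.exp (d * t)) - κ + d ≠ 0 := by
    have := den_pos (κ := κ) (d := d) hκ hκd (d * s - d * t)
    rw [Real.exp_sub] at this
    exact ne_of_gt this
  have h2 : (κ + d) * Real.exp (d * s) - (κ - d) * Real.exp (d * t) ≠ 0 :=
    ne_of_gt (G_pos hκ hκd t s)
  have hp : Real.exp (d * t) ≠ 0 := Real.exp_ne_zero _
  rw [div_eq_div_iff h1 h2]
  field_simp
  ring

lemma Bb_self (t : ℝ) : Bb b κ d t t = 0 := by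
  simp [Bb]

lemma hasDerivAt_Bb (hb : 0 < b) (hκ : 0 < κ) (hκd : κ < d)
    (hβ2 : β ^ 2 = (d ^ 2 - κ ^ 2) / (2 * b)) (t s : ℝ) :
    HasDerivAt (fun t => Bb b κ d t s)
      (κ * Bb b κ d t s + β ^ 2 / 2 * (Bb b κ d t s) ^ 2 - b) t := by
  have hE : HasDerivAt (fun t : ℝ => Real.exp (d * (s - t)))
      (-d * Real.exp (d * (s - t))) t := by
    have h1 : HasDerivAt (fun t : ℝ => d * (s - t)) (d * (-1)) t :=
      ((hasDerivAt_id t).const_sub s).const_mul d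
    simpa [mul_comm] using h1.exp
  set E := Real.exp (d * (s - t)) with hEdef
  have hDpos : 0 < (κ + d) * E - κ + d := den_pos hκ hκd _
  have hN : HasDerivAt (fun t : ℝ => 2 * b * (Real.exp (d * (s - t)) - 1))
      (2 * b * (-d * E)) t := (hE.sub_const 1).const_mul (2 * b)
  have hD : HasDerivAt (fun t : ℝ => (κ + d) * Real.exp (d * (s - t)) - κ + d)
      ((κ + d) * (-d * E)) t := ((hE.const_mul (κ + d)).sub_const κ).add_const d
  have hQ := hN.div hD (ne_of_gt hDpos)
  refine hQ.congr_deriv ?_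
  unfold Bb
  rw [hβ2, ← hEdef]
  set D := (κ + d) * E - κ + d with hDdef
  have hD' : D ≠ 0 := ne_of_gt hDpos
  have hb' : b ≠ 0 := ne_of_gt hb
  field_simp
  rw [hDdef]
  ring

lemma Aa_self (hκ : 0 < κ) (hκd : κ < d) (t : ℝ) : Aa b κ ν c₀ d t t = 0 := by
  unfold Aa
  have h1 : (κ + d) * Real.exp (d * t) - (κ - d) * Real.exp (d * t)
      = 2 * d * Real.exp (d * t) := by ring
  rw [h1, Real.log_mul (ne_of_gt (by linarith : (0:ℝ) < 2 * d)) (Real.exp_ne_zero _), Real.log_exp]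
  ring

lemma hasDerivAt_Aa (hb : 0 < b) (hκ : 0 < κ) (hκd : κ < d) (t s : ℝ) :
    HasDerivAt (fun t => Aa b κ ν c₀ d t s) (ν * Bb b κ d t s - c₀) t := by
  have hGpos := G_pos (κ := κ) (d := d) hκ hκd t s
  have hexp : HasDerivAt (fun t : ℝ => Real.exp (d * t)) (d * Real.exp (d * t)) t := by
    simpa [mul_comm] using ((hasDerivAt_id t).const_mul d).exp
  have hG : HasDerivAt (fun t : ℝ => (κ + d) * Real.exp (d * s) - (κ - d) * Real.exp (d * t))
      (-((κ - d) * (d * Real.exp (d * t)))) t := by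
    simpa using (hexp.const_mul (κ - d)).const_sub ((κ + d) * Real.exp (d * s))
  have hlog := hG.log (ne_of_gt hGpos)
  have hlin : HasDerivAt (fun t : ℝ => (1 / 2 : ℝ) * ((κ + d) * s - (κ - d) * t))
      ((1 / 2) * (-(κ - d))) t := by
    have : HasDerivAt (fun t : ℝ => (κ + d) * s - (κ - d) * t) (-(κ - d)) t := by
      simpa using ((hasDerivAt_id t).const_mul (κ - d)).const_sub ((κ + d) * s)
    exact this.const_mul (1 / 2)
  have hc : HasDerivAt (fun t : ℝ => c₀ * (s - t)) (c₀ * (-1)) t :=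
    ((hasDerivAt_id t).const_sub s).const_mul c₀
  have hfull := (((hlog.sub_const (Real.log (2 * d))).sub hlin).const_mul
      (4 * b * ν / (κ ^ 2 - d ^ 2))).add hc
  refine hfull.congr_deriv ?_
  rw [Bb_eq hκ hκd]
  have hk2 : κ ^ 2 - d ^ 2 ≠ 0 := by nlinarith
  field_simp
  ring

lemma cont_Bb (hκ : 0 < κ) (hκd : κ < d) :
    Continuous fun p : ℝ × ℝ => Bb b κ d p.1 p.2 := by
  unfold Bb
  exact Continuous.div (by continuity) (by continuity)
    fun p => ne_of_gt (den_pos hκ hκd _)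

lemma cont_Aa (hκ : 0 < κ) (hκd : κ < d) :
    Continuous fun p : ℝ × ℝ => Aa b κ ν c₀ d p.1 p.2 := by
  unfold Aa
  have hlog : Continuous fun p : ℝ × ℝ =>
      Real.log ((κ + d) * Real.exp (d * p.2) - (κ - d) * Real.exp (d * p.1)) :=
    Continuous.log (by continuity) fun p => ne_of_gt (G_pos hκ hκd _ _)
  exact ((continuous_const.mul ((hlog.sub continuous_const).sub (by continuity))).add (by continuity))

lemma hasDerivAt_F_y (t s z : ℝ) :
    HasDerivAt (fun z => Real.exp (Aa b κ ν c₀ d t s - Bb b κ d t s * z))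
      (-Bb b κ d t s * Real.exp (Aa b κ ν c₀ d t s - Bb b κ d t s * z)) z := by
  have h : HasDerivAt (fun z : ℝ => Aa b κ ν c₀ d t s - Bb b κ d t s * z)
      (-Bb b κ d t s) z := by
    simpa using ((hasDerivAt_id z).const_mul (Bb b κ d t s)).const_sub (Aa b κ ν c₀ d t s)
  simpa [mul_comm] using h.exp

lemma hasDerivAt_F_t (hb : 0 < b) (hκ : 0 < κ) (hκd : κ < d)
    (hβ2 : β ^ 2 = (d ^ 2 - κ ^ 2) / (2 * b)) (t s y : ℝ) :
    HasDerivAt (fun τ => Real.exp (Aa b κ ν c₀ d τ s - Bb b κ d τ s * y))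
      ((ν * Bb b κ d t s - c₀ -
          (κ * Bb b κ d t s + β ^ 2 / 2 * (Bb b κ d t s) ^ 2 - b) * y) *
        Real.exp (Aa b κ ν c₀ d t s - Bb b κ d t s * y)) t := by
  have h := ((hasDerivAt_Aa (ν := ν) (c₀ := c₀) hb hκ hκd t s).sub
      ((hasDerivAt_Bb hb hκ hκd hβ2 t s).mul_const y)).exp
  refine h.congr_deriv ?_
  simp only [Pi.sub_apply]
  ring

lemma bound_on_compact {h : ℝ × ℝ → ℝ} (hc : Continuous h) {K : Set (ℝ × ℝ)}
    (hK : IsCompact K) : ∃ M : ℝ, 0 ≤ M ∧ ∀ p ∈ K, |h p| ≤ M := by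
  obtain ⟨M, hM⟩ := hK.exists_bound_of_continuousOn hc.continuousOn
  exact ⟨max M 0, le_max_right _ _, fun p hp => le_trans (hM p hp) (le_max_left _ _)⟩
end aux

set_option maxHeartbeats 2000000 in
/-- The explicit formula `g(t,y) = δ^ψ ∫_t^T e^{A(t,s) − B(t,s)y} ds` solves the
semilinear PDE `g_t + (c₀ − by) g + (ν − κy) g_y + ½β̄² y g_{yy} + δ^ψ = 0` on
`[0,T) × [0,∞)` in the Heston model. -/
theorem heston_g_pde
    (b κ β ν c₀ T δ ψ : ℝ)
    (hb : 0 < b) (hκ : 0 < κ) (hβ : 0 < β) (hν : 0 < ν) (hT : 0 < T) (hδ : 0 < δ)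
    (d : ℝ) (hd : d = Real.sqrt (κ ^ 2 + 2 * b * β ^ 2))
    (B A : ℝ → ℝ → ℝ)
    (hB : ∀ t s : ℝ, t ≤ s → B t s = 2 * b * (Real.exp (d * (s - t)) - 1)
      / ((κ + d) * Real.exp (d * (s - t)) - κ + d))
    (hA : ∀ t s : ℝ, t ≤ s →
      A t s = (4 * b * ν / (κ ^ 2 - d ^ 2)) *
        (Real.log ((κ + d) * Real.exp (d * s) - (κ - d) * Real.exp (d * t))
          - Real.log (2 * d) - (1 / 2) * ((κ + d) * s - (κ - d) * t))
      + c₀ * (s - t))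
    (g : ℝ → ℝ → ℝ)
    (hg : ∀ t y : ℝ, g t y = δ ^ ψ * ∫ s in t..T, Real.exp (A t s - B t s * y)) :
    ∀ t ∈ Set.Ico (0 : ℝ) T, ∀ y ∈ Set.Ici (0 : ℝ),
      DifferentiableAt ℝ (fun τ => g τ y) t ∧
      DifferentiableAt ℝ (fun z => g t z) y ∧
      DifferentiableAt ℝ (deriv (fun z => g t z)) y ∧
      deriv (fun τ => g τ y) t + (c₀ - b * y) * g t y
        + (ν - κ * y) * deriv (fun z => g t z) y
        + (1 / 2) * β ^ 2 * y * deriv (deriv (fun z => g t z)) y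
        + δ ^ ψ = 0 := by
  intro t ht y _hy
  obtain ⟨ht0, htT⟩ := ht
  have hbβ : 0 < κ ^ 2 + 2 * b * β ^ 2 := by positivity
  have hd0 : 0 < d := hd ▸ Real.sqrt_pos.mpr hbβ
  have hd2 : d ^ 2 = κ ^ 2 + 2 * b * β ^ 2 := by rw [hd]; exact Real.sq_sqrt hbβ.le
  have h2bβ : 0 < 2 * b * β ^ 2 := by positivity
  have hκd : κ < d := by nlinarith
  have hβ2 : β ^ 2 = (d ^ 2 - κ ^ 2) / (2 * b) := by rw [hd2]; field_simp; ring
  -- the globally defined integrand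
  set F : ℝ → ℝ → ℝ → ℝ :=
    fun τ z s => Real.exp (Aa b κ ν c₀ d τ s - Bb b κ d τ s * z) with hF
  have cB := cont_Bb (b := b) hκ hκd
  have cA := cont_Aa (b := b) (ν := ν) (c₀ := c₀) hκ hκd
  -- continuity facts
  have contF2t : ∀ z, Continuous fun p : ℝ × ℝ => F p.1 z p.2 := fun z =>
    Real.continuous_exp.comp (cA.sub (cB.mul continuous_const))
  have contF2y : Continuous fun p : ℝ × ℝ => F t p.1 p.2 := by
    apply Real.continuous_exp.comp
    exact ((cA.comp (continuous_const.prodMk continuous_snd)).sub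
      ((cB.comp (continuous_const.prodMk continuous_snd)).mul continuous_fst))
  have hpair : ∀ τ : ℝ, Continuous fun s : ℝ => ((τ, s) : ℝ × ℝ) := fun τ =>
    continuous_const.prodMk continuous_id
  have contFs : ∀ τ z, Continuous fun s => F τ z s := by
    intro τ z
    simpa [Function.comp_def] using (contF2t z).comp (hpair τ)
  have cBs : Continuous fun s => Bb b κ d t s := by
    simpa [Function.comp_def] using cB.comp (hpair t)
  -- coefficient of the t-derivative of F
  set c : ℝ → ℝ → ℝ := fun τ s =>
    ν * Bb b κ d τ s - c₀ -
      (κ * Bb b κ d τ s + β ^ 2 / 2 * (Bb b κ d τ s) ^ 2 - b) * y with hc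
  have contc : Continuous fun p : ℝ × ℝ => c p.1 p.2 := by
    apply Continuous.sub
    · exact (continuous_const.mul cB).sub continuous_const
    · exact (((continuous_const.mul cB).add
        (continuous_const.mul (cB.pow 2))).sub continuous_const).mul continuous_const
  have contDt : Continuous fun p : ℝ × ℝ => c p.1 p.2 * F p.1 y p.2 :=
    contc.mul (contF2t y)
  have contcs : Continuous fun s => c t s * F t y s := by
    simpa [Function.comp_def] using contDt.comp (hpair t)
  have hdiff_t : ∀ (x s : ℝ), HasDerivAt (fun τ => F τ y s) (c x s * F x y s) x :=
    fun x s => hasDerivAt_F_t hb hκ hκd hβ2 x s y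
  have hdiff_y : ∀ (s x : ℝ), HasDerivAt (fun z => F t z s)
      (-Bb b κ d t s * F t x s) x := fun s x => hasDerivAt_F_y t s x
  -- g agrees with the explicit integral
  have hgeq : ∀ τ z : ℝ, τ ≤ T → g τ z = δ ^ ψ * ∫ s in τ..T, F τ z s := by
    intro τ z hτ
    rw [hg]
    congr 1
    apply intervalIntegral.integral_congr
    intro s hs
    rw [Set.uIcc_of_le hτ] at hs
    show Real.exp (A τ s - B τ s * z) = F τ z s
    rw [hA τ s hs.1, hB τ s hs.1, hF]
    simp only [Aa, Bb]
  -- first y-derivative, at every point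
  have hDy : ∀ z₀ : ℝ, HasDerivAt (fun z => ∫ s in t..T, F t z s)
      (∫ s in t..T, -Bb b κ d t s * F t z₀ s) z₀ := by
    intro z₀
    obtain ⟨M, hM0, hM⟩ := bound_on_compact
      (h := fun p : ℝ × ℝ => -Bb b κ d t p.2 * F t p.1 p.2)
      (((cBs.comp continuous_snd).neg).mul contF2y)
      ((isCompact_closedBall z₀ 1).prod (isCompact_uIcc (a := t) (b := T)))
    refine (intervalIntegral.hasDerivAt_integral_of_dominated_loc_of_deriv_le
      (F := fun z s => F t z s) (F' := fun z s => -Bb b κ d t s * F t z s)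
      (bound := fun _ => M) (Metric.ball_mem_nhds _ zero_lt_one)
      (Filter.Eventually.of_forall fun z => (contFs t z).aestronglyMeasurable)
      ((contFs t z₀).intervalIntegrable _ _)
      ((cBs.neg.mul (contFs t z₀)).aestronglyMeasurable)
      (Filter.Eventually.of_forall fun s hs x hx => ?_)
      intervalIntegrable_const
      (Filter.Eventually.of_forall fun s _ x _ => hdiff_y s x)).2
    rw [Real.norm_eq_abs]
    exact hM (x, s) (Set.mem_prod.mpr ⟨Metric.ball_subset_closedBall hx, Set.uIoc_subset_uIcc hs⟩)
  -- second y-derivative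
  have hDyy : HasDerivAt (fun z => ∫ s in t..T, -Bb b κ d t s * F t z s)
      (∫ s in t..T, Bb b κ d t s ^ 2 * F t y s) y := by
    obtain ⟨M, hM0, hM⟩ := bound_on_compact
      (h := fun p : ℝ × ℝ => Bb b κ d t p.2 ^ 2 * F t p.1 p.2)
      (((cBs.comp continuous_snd).pow 2).mul contF2y)
      ((isCompact_closedBall y 1).prod (isCompact_uIcc (a := t) (b := T)))
    refine (intervalIntegral.hasDerivAt_integral_of_dominated_loc_of_deriv_le
      (F := fun z s => -Bb b κ d t s * F t z s)
      (F' := fun z s => Bb b κ d t s ^ 2 * F t z s)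
      (bound := fun _ => M) (Metric.ball_mem_nhds _ zero_lt_one)
      (Filter.Eventually.of_forall fun z =>
        ((cBs.neg.mul (contFs t z))).aestronglyMeasurable)
      ((cBs.neg.mul (contFs t y)).intervalIntegrable _ _)
      (((cBs.pow 2).mul (contFs t y)).aestronglyMeasurable)
      (Filter.Eventually.of_forall fun s hs x hx => ?_)
      intervalIntegrable_const
      (Filter.Eventually.of_forall fun s _ x _ => ?_)).2
    · rw [Real.norm_eq_abs]
      exact hM (x, s) (Set.mem_prod.mpr ⟨Metric.ball_subset_closedBall hx, Set.uIoc_subset_uIcc hs⟩)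
    · have h := (hdiff_y s x).const_mul (-Bb b κ d t s)
      refine h.congr_deriv ?_
      ring
  -- t-derivative part (a): fixed limits
  obtain ⟨M, hM0, hM⟩ := bound_on_compact
    (h := fun p : ℝ × ℝ => c p.1 p.2 * F p.1 y p.2) contDt
    ((isCompact_closedBall t 1).prod (isCompact_uIcc (a := t) (b := T)))
  have hW1 : HasDerivAt (fun τ => ∫ s in t..T, F τ y s)
      (∫ s in t..T, c t s * F t y s) t := by
    refine (intervalIntegral.hasDerivAt_integral_of_dominated_loc_of_deriv_le
      (F := fun τ s => F τ y s) (F' := fun τ s => c τ s * F τ y s)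
      (bound := fun _ => M) (Metric.ball_mem_nhds _ zero_lt_one)
      (Filter.Eventually.of_forall fun τ => (contFs τ y).aestronglyMeasurable)
      ((contFs t y).intervalIntegrable _ _)
      (contcs.aestronglyMeasurable)
      (Filter.Eventually.of_forall fun s hs x hx => ?_)
      intervalIntegrable_const
      (Filter.Eventually.of_forall fun s _ x _ => hdiff_t x s)).2
    rw [Real.norm_eq_abs]
    exact hM (x, s) (Set.mem_prod.mpr ⟨Metric.ball_subset_closedBall hx, Set.uIoc_subset_uIcc hs⟩)
  -- t-derivative part (b): FTC
  have hW2 : HasDerivAt (fun τ => ∫ s in t..τ, F t y s) (F t y t) t :=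
    intervalIntegral.integral_hasDerivAt_right ((contFs t y).intervalIntegrable _ _)
      ((contFs t y).stronglyMeasurableAtFilter _ _) (contFs t y).continuousAt
  -- t-derivative part (c): the correction term is o(τ - t)
  obtain ⟨L, hL0, hL⟩ := bound_on_compact
    (h := fun p : ℝ × ℝ => c p.1 p.2 * F p.1 y p.2) contDt
    ((isCompact_closedBall t 1).prod (isCompact_closedBall t 1))
  have hlip : ∀ τ ∈ Metric.closedBall t 1, ∀ s ∈ Metric.closedBall t 1,
      |F τ y s - F t y s| ≤ L * |τ - t| := by
    intro τ hτ s hs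
    have := (convex_closedBall t 1).norm_image_sub_le_of_norm_hasDerivWithin_le
      (f := fun x => F x y s) (f' := fun x => c x s * F x y s)
      (fun x _ => (hdiff_t x s).hasDerivWithinAt)
      (fun x hx => by rw [Real.norm_eq_abs]; exact hL (x, s) (Set.mem_prod.mpr ⟨hx, hs⟩))
      (Metric.mem_closedBall_self zero_le_one) hτ
    simpa [Real.norm_eq_abs] using this
  have hW3 : HasDerivAt (fun τ => ∫ s in t..τ, (F τ y s - F t y s)) 0 t := by
    rw [hasDerivAt_iff_isLittleO]
    simp only [intervalIntegral.integral_same, sub_zero, smul_zero, sub_zero]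
    rw [Asymptotics.isLittleO_iff]
    intro ε hε
    have hmem : Metric.closedBall t (min 1 (ε / (L + 1))) ∈ 𝓝 t :=
      Metric.closedBall_mem_nhds t (by positivity)
    filter_upwards [hmem] with τ hτ
    rw [Metric.mem_closedBall, Real.dist_eq] at hτ
    have h1 : |τ - t| ≤ 1 := le_trans hτ (min_le_left _ _)
    have h2 : |τ - t| ≤ ε / (L + 1) := le_trans hτ (min_le_right _ _)
    have hτball : τ ∈ Metric.closedBall t 1 := by
      rw [Metric.mem_closedBall, Real.dist_eq]; exact h1
    have hbound : ‖∫ s in t..τ, (F τ y s - F t y s)‖ ≤ (L * |τ - t|) * |τ - t| := by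
      apply intervalIntegral.norm_integral_le_of_norm_le_const
      intro s hs
      have hs' : s ∈ Metric.closedBall t 1 := by
        rw [Metric.mem_closedBall, Real.dist_eq]
        rw [Set.mem_uIoc] at hs
        rcases hs with ⟨hl, hr⟩ | ⟨hl, hr⟩ <;> rw [abs_le] <;> constructor <;>
          [skip; skip; skip; skip] <;>
          nlinarith [le_abs_self (τ - t), neg_abs_le (τ - t)]
      rw [Real.norm_eq_abs]
      exact hlip τ hτball s hs'
    have h2' : |τ - t| * (L + 1) ≤ ε := (le_div_iff₀ (by positivity)).mp h2
    rw [Real.norm_eq_abs]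
    calc ‖∫ s in t..τ, (F τ y s - F t y s)‖ ≤ (L * |τ - t|) * |τ - t| := hbound
      _ ≤ ε * |τ - t| := by nlinarith [abs_nonneg (τ - t)]
  -- combine the three parts
  have hsplit : ∀ τ : ℝ, (∫ s in τ..T, F τ y s) = (∫ s in t..T, F τ y s)
      - (∫ s in t..τ, F t y s) - ∫ s in t..τ, (F τ y s - F t y s) := by
    intro τ
    have hi1 : IntervalIntegrable (fun s => F τ y s) volume t τ :=
      (contFs τ y).intervalIntegrable _ _
    have hi2 : IntervalIntegrable (fun s => F τ y s) volume τ T :=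
      (contFs τ y).intervalIntegrable _ _
    have hi3 : IntervalIntegrable (fun s => F t y s) volume t τ :=
      (contFs t y).intervalIntegrable _ _
    have hadd := intervalIntegral.integral_add_adjacent_intervals hi1 hi2
    have hsub := intervalIntegral.integral_sub hi1 hi3
    rw [hsub]
    linarith
  have hFtt : F t y t = 1 := by
    rw [hF]
    simp [Bb_self, Aa_self (b := b) (ν := ν) (c₀ := c₀) hκ hκd]
  have hG0 : HasDerivAt (fun τ => ∫ s in τ..T, F τ y s)
      ((∫ s in t..T, c t s * F t y s) - 1) t := by
    have heq : (fun τ => ∫ s in τ..T, F τ y s) = fun τ => (∫ s in t..T, F τ y s)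
        - (∫ s in t..τ, F t y s) - ∫ s in t..τ, (F τ y s - F t y s) := funext hsplit
    rw [heq]
    have h := (hW1.sub hW2).sub hW3
    rw [hFtt] at h
    rw [sub_zero] at h
    exact h
  have h1 : HasDerivAt (fun τ => g τ y)
      (δ ^ ψ * ((∫ s in t..T, c t s * F t y s) - 1)) t := by
    apply (hG0.const_mul (δ ^ ψ)).congr_of_eventuallyEq
    filter_upwards [Iio_mem_nhds htT] with τ hτ
    exact hgeq τ y (le_of_lt hτ)
  have hgyfun : (fun z => g t z) = fun z => δ ^ ψ * ∫ s in t..T, F t z s :=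
    funext fun z => hgeq t z htT.le
  have h2 : ∀ z₀ : ℝ, HasDerivAt (fun z => g t z)
      (δ ^ ψ * ∫ s in t..T, -Bb b κ d t s * F t z₀ s) z₀ := by
    intro z₀
    rw [hgyfun]
    exact (hDy z₀).const_mul _
  have hderiv_fun : deriv (fun z => g t z)
      = fun z₀ => δ ^ ψ * ∫ s in t..T, -Bb b κ d t s * F t z₀ s :=
    funext fun z₀ => (h2 z₀).deriv
  have h3 : HasDerivAt (deriv (fun z => g t z))
      (δ ^ ψ * ∫ s in t..T, Bb b κ d t s ^ 2 * F t y s) y := by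
    rw [hderiv_fun]
    exact hDyy.const_mul _
  refine ⟨h1.differentiableAt, (h2 y).differentiableAt, h3.differentiableAt, ?_⟩
  rw [h1.deriv, (h2 y).deriv, h3.deriv, hgeq t y htT.le]
  -- the pointwise algebraic identity under the integral
  have hcF : Continuous fun s => F t y s := contFs t y
  have key : (∫ s in t..T, c t s * F t y s)
      = (-(c₀ - b * y)) * (∫ s in t..T, F t y s)
        + ((-(ν - κ * y)) * (∫ s in t..T, -Bb b κ d t s * F t y s)
        + (-(1 / 2 * β ^ 2 * y)) * (∫ s in t..T, Bb b κ d t s ^ 2 * F t y s)) := by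
    rw [← intervalIntegral.integral_const_mul, ← intervalIntegral.integral_const_mul,
      ← intervalIntegral.integral_const_mul,
      ← intervalIntegral.integral_add
        (f := fun s => -(ν - κ * y) * (-Bb b κ d t s * F t y s))
        (g := fun s => -(1 / 2 * β ^ 2 * y) * (Bb b κ d t s ^ 2 * F t y s))
        ((continuous_const.mul (cBs.neg.mul hcF)).intervalIntegrable _ _)
        ((continuous_const.mul ((cBs.pow 2).mul hcF)).intervalIntegrable _ _),
      ← intervalIntegral.integral_add
        (f := fun s => -(c₀ - b * y) * F t y s)
        (g := fun s => -(ν - κ * y) * (-Bb b κ d t s * F t y s)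
          + -(1 / 2 * β ^ 2 * y) * (Bb b κ d t s ^ 2 * F t y s))
        ((continuous_const.mul hcF).intervalIntegrable _ _)
        (((continuous_const.mul (cBs.neg.mul hcF)).add
          (continuous_const.mul ((cBs.pow 2).mul hcF))).intervalIntegrable _ _)]
    apply intervalIntegral.integral_congr
    intro s _
    rw [hc]
    ring
  rw [key]
  ring
end

section
/- Fix real constants b > 0, κ > 0, β̄ > 0, ν > 0, c₀ ∈ ℝ, T > 0, δ > 0 and ψ ∈ ℝ, set d := √(κ² + 2bβ̄²), and for t ≤ s define B(t,s) := 2b(e^{d(s−t)} − 1)/((κ + d)e^{d(s−t)} − κ + d) and A(t,s) := (4bν/(κ² − d²))·[ln((κ+d)e^{ds} − (κ−d)e^{dt}) − ln(2d) − (1/2)((κ+d)s − (κ−d)t)] + c₀(s − t). Define g(t,y) := δ^ψ ∫_t^T e^{A(t,s) − B(t,s)y} ds for (t,y) ∈ [0,T) × [0,∞). Then for every (t,y) ∈ [0,T) × [0,∞): g(t,y) > 0, the partial derivative ∂_y g(t,y) exists and equals −δ^ψ ∫_t^T B(t,s) e^{A(t,s) − B(t,s)y} ds, hence ∂_y g(t,y)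 ≤ 0, and moreover |∂_y g(t,y)| ≤ (b/κ) g(t,y). -/
/-- Positivity of the explicit value-function factor `g` in the Heston model, the
explicit formula for its `y`-derivative, its nonpositivity, and the logarithmic
derivative bound `|g_y| ≤ (b/κ) g`. -/
theorem heston_g_y_derivative_bounds
    (b κ β ν c₀ T δ ψ : ℝ)
    (hb : 0 < b) (hκ : 0 < κ) (hβ : 0 < β) (hν : 0 < ν) (hT : 0 < T) (hδ : 0 < δ)
    (d : ℝ) (hd : d = Real.sqrt (κ ^ 2 + 2 * b * β ^ 2))
    (B A : ℝ → ℝ → ℝ)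
    (hB : ∀ t s : ℝ, t ≤ s → B t s = 2 * b * (Real.exp (d * (s - t)) - 1)
      / ((κ + d) * Real.exp (d * (s - t)) - κ + d))
    (hA : ∀ t s : ℝ, t ≤ s →
      A t s = (4 * b * ν / (κ ^ 2 - d ^ 2)) *
        (Real.log ((κ + d) * Real.exp (d * s) - (κ - d) * Real.exp (d * t))
          - Real.log (2 * d) - (1 / 2) * ((κ + d) * s - (κ - d) * t))
      + c₀ * (s - t))
    (g : ℝ → ℝ → ℝ)
    (hg : ∀ t y : ℝ, g t y = δ ^ ψ * ∫ s in t..T, Real.exp (A t s - B t s * y)) :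
    ∀ t ∈ Set.Ico (0 : ℝ) T, ∀ y ∈ Set.Ici (0 : ℝ),
      0 < g t y ∧
      HasDerivAt (fun z => g t z)
        (-(δ ^ ψ) * ∫ s in t..T, B t s * Real.exp (A t s - B t s * y)) y ∧
      deriv (fun z => g t z) y ≤ 0 ∧
      |deriv (fun z => g t z) y| ≤ (b / κ) * g t y := by
  -- basic facts about d
  have hsum_pos : 0 < κ ^ 2 + 2 * b * β ^ 2 := by positivity
  have hκd : κ < d := by
    rw [hd]
    have h2 : 0 < 2 * b * β ^ 2 := by positivity
    nlinarith [Real.sq_sqrt hsum_pos.le, Real.sqrt_nonneg (κ ^ 2 + 2 * b * β ^ 2)]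
  have hd0 : 0 < d := hκ.trans hκd
  intro t ht y hy
  have htT : t ≤ T := ht.2.le
  have hδψ : 0 < δ ^ ψ := Real.rpow_pos_of_pos hδ ψ
  -- denominator positivity
  have hden : ∀ s : ℝ, t ≤ s → 0 < (κ + d) * Real.exp (d * (s - t)) - κ + d := by
    intro s hs
    have he : (1 : ℝ) ≤ Real.exp (d * (s - t)) := by
      rw [Real.one_le_exp_iff]
      exact mul_nonneg hd0.le (by linarith)
    nlinarith [he]
  -- B is nonnegative
  have hB0 : ∀ s : ℝ, t ≤ s → 0 ≤ B t s := by
    intro s hs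
    rw [hB t s hs]
    have he : (1 : ℝ) ≤ Real.exp (d * (s - t)) := by
      rw [Real.one_le_exp_iff]
      exact mul_nonneg hd0.le (by linarith)
    have := hden s hs
    apply div_nonneg _ (by linarith)
    nlinarith
  -- B ≤ b / κ
  have hBle : ∀ s : ℝ, t ≤ s → B t s ≤ b / κ := by
    intro s hs
    rw [hB t s hs, div_le_div_iff₀ (hden s hs) hκ]
    have he : (1 : ℝ) ≤ Real.exp (d * (s - t)) := by
      rw [Real.one_le_exp_iff]
      exact mul_nonneg hd0.le (by linarith)
    nlinarith [he, mul_nonneg (mul_nonneg hb.le (sub_nonneg.2 hκd.le))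
      (le_trans zero_le_one he)]
  -- continuity of s ↦ B t s on Icc t T
  have hBcont : ContinuousOn (fun s => B t s) (Set.Icc t T) := by
    apply ContinuousOn.congr (f := fun s =>
      2 * b * (Real.exp (d * (s - t)) - 1) / ((κ + d) * Real.exp (d * (s - t)) - κ + d))
    · apply ContinuousOn.div
      · fun_prop
      · fun_prop
      · intro s hs; exact (hden s hs.1).ne'
    · intro s hs; exact hB t s hs.1
  -- positivity of the log argument
  have hlogarg : ∀ s : ℝ, t ≤ s →
      0 < (κ + d) * Real.exp (d * s) - (κ - d) * Real.exp (d * t) := by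
    intro s hs
    have h1 : Real.exp (d * t) ≤ Real.exp (d * s) := by
      apply Real.exp_le_exp.2; nlinarith
    nlinarith [Real.exp_pos (d * t), Real.exp_pos (d * s)]
  -- continuity of s ↦ A t s on Icc t T
  have hAcont : ContinuousOn (fun s => A t s) (Set.Icc t T) := by
    apply ContinuousOn.congr (f := fun s =>
      (4 * b * ν / (κ ^ 2 - d ^ 2)) *
        (Real.log ((κ + d) * Real.exp (d * s) - (κ - d) * Real.exp (d * t))
          - Real.log (2 * d) - (1 / 2) * ((κ + d) * s - (κ - d) * t))
      + c₀ * (s - t))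
    · apply ContinuousOn.add _ (by fun_prop)
      apply ContinuousOn.mul continuousOn_const
      apply ContinuousOn.sub (ContinuousOn.sub _ continuousOn_const) (by fun_prop)
      apply ContinuousOn.log (by fun_prop)
      intro s hs; exact (hlogarg s hs.1).ne'
    · intro s hs; exact hA t s hs.1
  -- continuity of the integrands
  have hcont1 : ∀ x : ℝ, ContinuousOn (fun s => Real.exp (A t s - B t s * x))
      (Set.Icc t T) := fun x =>
    Real.continuous_exp.comp_continuousOn (hAcont.sub (hBcont.mul continuousOn_const))
  have hcont2 : ∀ x : ℝ, ContinuousOn (fun s => B t s * Real.exp (A t s - B t s * x))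
      (Set.Icc t T) := fun x => hBcont.mul (hcont1 x)
  have huIcc : Set.uIcc t T = Set.Icc t T := Set.uIcc_of_le htT
  have hint1 : ∀ x : ℝ, IntervalIntegrable (fun s => Real.exp (A t s - B t s * x))
      MeasureTheory.volume t T := fun x =>
    (huIcc ▸ hcont1 x).intervalIntegrable
  have hint2 : ∀ x : ℝ, IntervalIntegrable (fun s => B t s * Real.exp (A t s - B t s * x))
      MeasureTheory.volume t T := fun x =>
    (huIcc ▸ hcont2 x).intervalIntegrable
  set I1 : ℝ := ∫ s in t..T, Real.exp (A t s - B t s * y) with hI1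
  set I2 : ℝ := ∫ s in t..T, B t s * Real.exp (A t s - B t s * y) with hI2
  -- positivity of I1
  have hI1pos : 0 < I1 := by
    apply intervalIntegral.intervalIntegral_pos_of_pos_on (hint1 y)
      (fun s _ => Real.exp_pos _) ht.2
  have hgpos : 0 < g t y := by rw [hg]; exact mul_pos hδψ hI1pos
  -- I2 is nonnegative
  have hI2nonneg : 0 ≤ I2 := by
    apply intervalIntegral.integral_nonneg htT
    intro s hs
    exact mul_nonneg (hB0 s hs.1) (Real.exp_pos _).le
  -- differentiation under the integral sign
  have hIsub : Set.uIoc t T ⊆ Set.Icc t T := by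
    rw [Set.uIoc_of_le htT]; exact Set.Ioc_subset_Icc_self
  have key : IntervalIntegrable (fun s => -(B t s * Real.exp (A t s - B t s * y)))
        MeasureTheory.volume t T ∧
      HasDerivAt (fun x => ∫ s in t..T, Real.exp (A t s - B t s * x))
        (∫ s in t..T, -(B t s * Real.exp (A t s - B t s * y))) y := by
    apply intervalIntegral.hasDerivAt_integral_of_dominated_loc_of_deriv_le
      (F := fun x s => Real.exp (A t s - B t s * x))
      (F' := fun x s => -(B t s * Real.exp (A t s - B t s * x)))
      (bound := fun s => (b / κ) * Real.exp (A t s + (b / κ) * (|y| + 1)))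
      (s := Metric.ball y 1) (Metric.ball_mem_nhds y one_pos)
    · filter_upwards with x
      exact ((hcont1 x).mono hIsub).aestronglyMeasurable measurableSet_uIoc
    · exact hint1 y
    · exact (((hcont2 y).mono hIsub).aestronglyMeasurable measurableSet_uIoc).neg
    · apply MeasureTheory.ae_of_all
      intro s hs x hx
      have hts : t ≤ s := (hIsub hs).1
      have hxb : |x| ≤ |y| + 1 := by
        have := mem_ball_iff_norm.1 hx
        rw [Real.norm_eq_abs] at this
        calc |x| ≤ |x - y| + |y| := by
              have := abs_sub_abs_le_abs_sub x y; linarith [abs_nonneg (x - y)]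
          _ ≤ |y| + 1 := by linarith
      have hBx : -(B t s * x) ≤ (b / κ) * (|y| + 1) := by
        have h1 : -(B t s * x) ≤ B t s * |x| := by
          have := neg_abs_le x
          nlinarith [hB0 s hts, abs_nonneg x]
        have h2 : B t s * |x| ≤ (b / κ) * (|y| + 1) := by
          apply mul_le_mul (hBle s hts) hxb (abs_nonneg x) (by positivity)
        linarith
      rw [norm_neg, Real.norm_eq_abs,
        abs_of_nonneg (mul_nonneg (hB0 s hts) (Real.exp_pos _).le)]
      apply mul_le_mul (hBle s hts) _ (Real.exp_pos _).le (by positivity)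
      apply Real.exp_le_exp.2
      linarith
    · apply ContinuousOn.intervalIntegrable
      rw [huIcc]
      apply ContinuousOn.mul continuousOn_const
      exact Real.continuous_exp.comp_continuousOn (hAcont.add continuousOn_const)
    · apply MeasureTheory.ae_of_all
      intro s hs x hx
      have : HasDerivAt (fun z : ℝ => A t s - B t s * z) (-(B t s)) x := by
        simpa using ((hasDerivAt_id x).const_mul (B t s)).const_sub (A t s)
      have := this.exp
      exact this.congr_deriv (by ring)
  have hintneg : (∫ s in t..T, -(B t s * Real.exp (A t s - B t s * y))) = -I2 := by
    rw [hI2, intervalIntegral.integral_neg]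
  have hder : HasDerivAt (fun z => g t z) (-(δ ^ ψ) * I2) y := by
    have h2 := (key.2).const_mul (δ ^ ψ)
    rw [hintneg] at h2
    have heq : (fun x => δ ^ ψ * ∫ s in t..T, Real.exp (A t s - B t s * x))
        = fun z => g t z := by
      funext z; rw [hg]
    rw [heq] at h2
    rw [show -(δ ^ ψ) * I2 = δ ^ ψ * -I2 by ring]
    exact h2
  have hderiv : deriv (fun z => g t z) y = -(δ ^ ψ) * I2 := hder.deriv
  refine ⟨hgpos, hder, ?_, ?_⟩
  · rw [hderiv]
    nlinarith
  · rw [hderiv, hg]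
    have habs : |(-(δ ^ ψ) * I2)| = δ ^ ψ * I2 := by
      rw [abs_mul, abs_neg, abs_of_pos hδψ, abs_of_nonneg hI2nonneg]
    rw [habs]
    have hI2le : I2 ≤ (b / κ) * I1 := by
      rw [hI1, ← intervalIntegral.integral_const_mul]
      apply intervalIntegral.integral_mono_on htT (hint2 y)
        ((hint1 y).const_mul _)
      intro s hs
      exact mul_le_mul_of_nonneg_right (hBle s hs.1) (Real.exp_pos _).le
    calc δ ^ ψ * I2 ≤ δ ^ ψ * ((b / κ) * I1) :=
          mul_le_mul_of_nonneg_left hI2le hδψ.le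
      _ = (b / κ) * (δ ^ ψ * I1) := by ring
end

section
/- Fix real constants b > 0, κ > 0, β̄ > 0, ν > 0, c₀ ∈ ℝ, T > 0, δ > 0 and ψ ∈ ℝ, set d := √(κ² + 2bβ̄²), and for t ≤ s define B(t,s) := 2b(e^{d(s−t)} − 1)/((κ + d)e^{d(s−t)} − κ + d) and A(t,s) := (4bν/(κ² − d²))·[ln((κ+d)e^{ds} − (κ−d)e^{dt}) − ln(2d) − (1/2)((κ+d)s − (κ−d)t)] + c₀(s − t). Define g(t,y) := δ^ψ ∫_t^T e^{A(t,s) − B(t,s)y} ds for (t,y) ∈ [0,T) × [0,∞). Let further γ > 1, a > 0, k > 0, λ̄ ∈ ℝ and ρ ∈ [−1, 0], and define π*(t,y) := λ̄/(γ+a) + ((1−γ−a)kβ̄ρ)/((γ+a)(1−γ)) · (∂_y g(t,y)/g(t,y)) and K_π := λ̄/(γ+a) + ((1−γ−a)kβ̄|ρ|b)/((γ+a)(1−γ)κ). Then for every (t,y) ∈ [0,T) × [0,∞): λ̄/(γ+a) ≤ π*(t,y) ≤ K_π. -/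
open Real MeasureTheory intervalIntegral Set Metric


set_option maxHeartbeats 1000000 in
/-- Bounds on the candidate optimal portfolio proportion in the robust
consumption–portfolio problem for the Heston model:
`λ̄/(γ+a) ≤ π*(t,y) ≤ K_π` on `[0,T) × [0,∞)`. -/
theorem heston_optimal_portfolio_bounds
    (b κ β ν c₀ T δ ψ : ℝ)
    (hb : 0 < b) (hκ : 0 < κ) (hβ : 0 < β) (hν : 0 < ν) (hT : 0 < T) (hδ : 0 < δ)
    (d : ℝ) (hd : d = Real.sqrt (κ ^ 2 + 2 * b * β ^ 2))
    (B A : ℝ → ℝ → ℝ)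
    (hB : ∀ t s : ℝ, t ≤ s → B t s = 2 * b * (Real.exp (d * (s - t)) - 1)
      / ((κ + d) * Real.exp (d * (s - t)) - κ + d))
    (hA : ∀ t s : ℝ, t ≤ s →
      A t s = (4 * b * ν / (κ ^ 2 - d ^ 2)) *
        (Real.log ((κ + d) * Real.exp (d * s) - (κ - d) * Real.exp (d * t))
          - Real.log (2 * d) - (1 / 2) * ((κ + d) * s - (κ - d) * t))
      + c₀ * (s - t))
    (g : ℝ → ℝ → ℝ)
    (hg : ∀ t y : ℝ, g t y = δ ^ ψ * ∫ s in t..T, Real.exp (A t s - B t s * y))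
    (γ a k lam ρ : ℝ)
    (hγ : 1 < γ) (ha : 0 < a) (hk : 0 < k) (hρ : ρ ∈ Set.Icc (-1 : ℝ) 0)
    (πstar : ℝ → ℝ → ℝ)
    (hπstar : ∀ t y : ℝ, πstar t y = lam / (γ + a)
      + ((1 - γ - a) * k * β * ρ) / ((γ + a) * (1 - γ))
        * (deriv (fun z => g t z) y / g t y))
    (Kπ : ℝ)
    (hKπ : Kπ = lam / (γ + a)
      + ((1 - γ - a) * k * β * |ρ| * b) / ((γ + a) * (1 - γ) * κ)) :
    ∀ t ∈ Set.Ico (0 : ℝ) T, ∀ y ∈ Set.Ici (0 : ℝ),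
      lam / (γ + a) ≤ πstar t y ∧ πstar t y ≤ Kπ := by
  -- basic facts about d
  have hκd : κ < d := by
    calc κ = Real.sqrt (κ ^ 2) := by rw [Real.sqrt_sq hκ.le]
      _ < d := by
          rw [hd]; exact Real.sqrt_lt_sqrt (by positivity)
            (by nlinarith [mul_pos hb (pow_pos hβ 2)])
  have hd0 : 0 < d := hκ.trans hκd
  intro t ht y hy
  obtain ⟨ht0, htT⟩ := ht
  have hy0 : (0:ℝ) ≤ y := hy
  -- pointwise bounds on B on [t,T]
  have hBbnd : ∀ s ∈ Icc t T, 0 ≤ B t s ∧ B t s ≤ b / κ := by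
    intro s hs
    have hts : t ≤ s := hs.1
    have he1 : (1:ℝ) ≤ Real.exp (d * (s - t)) :=
      Real.one_le_exp (by nlinarith [hs.1, hd0.le])
    have hden : 0 < (κ + d) * Real.exp (d * (s - t)) - κ + d := by nlinarith
    rw [hB t s hts]
    constructor
    · apply div_nonneg (by nlinarith) hden.le
    · rw [div_le_div_iff₀ hden hκ]
      nlinarith [mul_pos hb (mul_pos (sub_pos.2 hκd)
        (by positivity : (0:ℝ) < Real.exp (d * (s - t)) + 1))]
  -- continuity of B and A on [t,T]
  have hdenA : ∀ s : ℝ, 0 < (κ + d) * Real.exp (d * s) - (κ - d) * Real.exp (d * t) := by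
    intro s
    have := Real.exp_pos (d * s); have := Real.exp_pos (d * t); nlinarith
  have contB : ContinuousOn (fun s => B t s) (Icc t T) := by
    apply ContinuousOn.congr (f := fun s =>
      2 * b * (Real.exp (d * (s - t)) - 1) / ((κ + d) * Real.exp (d * (s - t)) - κ + d))
    · apply ContinuousOn.div (by fun_prop) (by fun_prop)
      intro s hs
      have he1 : (1:ℝ) ≤ Real.exp (d * (s - t)) :=
        Real.one_le_exp (by nlinarith [hs.1, hd0.le])
      nlinarith
    · intro s hs; exact hB t s hs.1
  have contA : ContinuousOn (fun s => A t s) (Icc t T) := by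
    apply ContinuousOn.congr (f := fun s => (4 * b * ν / (κ ^ 2 - d ^ 2)) *
        (Real.log ((κ + d) * Real.exp (d * s) - (κ - d) * Real.exp (d * t))
          - Real.log (2 * d) - (1 / 2) * ((κ + d) * s - (κ - d) * t))
      + c₀ * (s - t))
    · apply ContinuousOn.add _ (by fun_prop)
      apply ContinuousOn.mul continuousOn_const
      apply ContinuousOn.sub (ContinuousOn.sub _ continuousOn_const) (by fun_prop)
      exact ContinuousOn.log (by fun_prop) (fun s _ => (hdenA s).ne')
    · intro s hs; exact hA t s hs.1
  -- integrability of the basic integrands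
  have huIcc : Set.uIcc t T = Icc t T := Set.uIcc_of_le htT.le
  have huIoc : Set.uIoc t T = Ioc t T := Set.uIoc_of_le htT.le
  have contI : ∀ x : ℝ, ContinuousOn (fun s => Real.exp (A t s - B t s * x)) (Icc t T) := by
    intro x
    exact (contA.sub (contB.mul continuousOn_const)).rexp
  have intI : ∀ x : ℝ, IntervalIntegrable (fun s => Real.exp (A t s - B t s * x)) volume t T := by
    intro x; apply ContinuousOn.intervalIntegrable; rw [huIcc]; exact contI x
  have contJ : ContinuousOn (fun s => B t s * Real.exp (A t s - B t s * y)) (Icc t T) :=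
    contB.mul (contI y)
  have intJ : IntervalIntegrable (fun s => B t s * Real.exp (A t s - B t s * y)) volume t T := by
    apply ContinuousOn.intervalIntegrable; rw [huIcc]; exact contJ
  -- derivative under the integral sign
  have hbound_cont : ContinuousOn (fun s => (b / κ) * Real.exp (A t s + B t s * (1 + y)))
      (Icc t T) := continuousOn_const.mul ((contA.add (contB.mul continuousOn_const)).rexp)
  have hder : HasDerivAt (fun x => ∫ s in t..T, Real.exp (A t s - B t s * x))
      (∫ s in t..T, -(B t s * Real.exp (A t s - B t s * y))) y := by
    have key := intervalIntegral.hasDerivAt_integral_of_dominated_loc_of_deriv_le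
      (F := fun x s => Real.exp (A t s - B t s * x))
      (F' := fun x s => -(B t s * Real.exp (A t s - B t s * x)))
      (x₀ := y) (a := t) (b := T) (μ := volume)
      (bound := fun s => (b / κ) * Real.exp (A t s + B t s * (1 + y)))
      (s := ball y 1) (ball_mem_nhds y one_pos)
      (Filter.Eventually.of_forall fun x => by
        rw [huIoc]
        exact ((contI x).mono Ioc_subset_Icc_self).aestronglyMeasurable measurableSet_Ioc)
      (intI y)
      (by
        rw [huIoc]
        exact ((contJ.neg).mono Ioc_subset_Icc_self).aestronglyMeasurable measurableSet_Ioc)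
      (Filter.Eventually.of_forall fun s hs => by
        intro x hx
        rw [huIoc] at hs
        have hsI : s ∈ Icc t T := Ioc_subset_Icc_self hs
        obtain ⟨hB0, hBk⟩ := hBbnd s hsI
        have hxb : -1 + y < x ∧ x < 1 + y := by
          rw [mem_ball, Real.dist_eq, abs_lt] at hx; constructor <;> linarith [hx.1, hx.2]
        have hBx : -(B t s * x) ≤ B t s * (1 + y) := by nlinarith [hxb.1]
        rw [norm_neg, norm_mul, Real.norm_eq_abs, Real.norm_eq_abs,
          abs_of_nonneg hB0, abs_of_nonneg (Real.exp_pos _).le]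
        have : Real.exp (A t s - B t s * x) ≤ Real.exp (A t s + B t s * (1 + y)) :=
          Real.exp_le_exp.2 (by linarith)
        calc B t s * Real.exp (A t s - B t s * x)
            ≤ (b / κ) * Real.exp (A t s + B t s * (1 + y)) := by
              apply mul_le_mul hBk this (Real.exp_pos _).le
              positivity)
      (by
        apply ContinuousOn.intervalIntegrable; rw [huIcc]; exact hbound_cont)
      (Filter.Eventually.of_forall fun s hs => by
        intro x hx
        have h1 : HasDerivAt (fun x : ℝ => A t s - B t s * x) (-(B t s)) x := by
          simpa using ((hasDerivAt_id x).const_mul (B t s)).const_sub (A t s)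
        simpa [neg_mul, mul_comm] using h1.exp)
    exact key.2
  -- the three integrals
  set I : ℝ := ∫ s in t..T, Real.exp (A t s - B t s * y) with hI
  set J : ℝ := ∫ s in t..T, B t s * Real.exp (A t s - B t s * y) with hJ
  have hIpos : 0 < I := by
    apply intervalIntegral.intervalIntegral_pos_of_pos_on (intI y)
      (fun s _ => Real.exp_pos _) htT
  have hJnn : 0 ≤ J := by
    apply intervalIntegral.integral_nonneg htT.le
    intro s hs
    exact mul_nonneg (hBbnd s hs).1 (Real.exp_pos _).le
  have hJle : J ≤ (b / κ) * I := by
    rw [hJ, hI, ← intervalIntegral.integral_const_mul]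
    apply intervalIntegral.integral_mono_on htT.le intJ
      (((intI y)).const_mul _)
    intro s hs
    exact mul_le_mul_of_nonneg_right (hBbnd s hs).2 (Real.exp_pos _).le
  -- derivative of g and the ratio
  have hgy : deriv (fun z => g t z) y = δ ^ ψ * (-J) := by
    have : (fun z => g t z) = fun z => δ ^ ψ * ∫ s in t..T, Real.exp (A t s - B t s * z) := by
      funext z; exact hg t z
    rw [this]
    have := (hder.const_mul (δ ^ ψ)).deriv
    rw [this, hJ, intervalIntegral.integral_neg]
  have hδψ : (0:ℝ) < δ ^ ψ := Real.rpow_pos_of_pos hδ ψ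
  have hratio : deriv (fun z => g t z) y / g t y = -(J / I) := by
    rw [hgy, hg t y, ← hI, mul_div_mul_left _ _ hδψ.ne', neg_div]
  have hR1 : -(b / κ) ≤ deriv (fun z => g t z) y / g t y := by
    rw [hratio, neg_le_neg_iff, div_le_iff₀ hIpos]
    linarith
  have hR2 : deriv (fun z => g t z) y / g t y ≤ 0 := by
    rw [hratio, neg_nonpos]
    positivity
  -- algebra
  set C : ℝ := ((1 - γ - a) * k * β * ρ) / ((γ + a) * (1 - γ)) with hC
  have hCnp : C ≤ 0 := by
    apply div_nonpos_of_nonneg_of_nonpos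
    · have h1 : (1 - γ - a) ≤ 0 := by linarith
      have h2 : ρ ≤ 0 := hρ.2
      have h3 : (0:ℝ) ≤ ((1 - γ - a) * ρ) * (k * β) :=
        mul_nonneg (mul_nonneg_of_nonpos_of_nonpos h1 h2) (by positivity)
      nlinarith [h3]
    · nlinarith [mul_pos (show (0:ℝ) < γ + a by linarith)
        (show (0:ℝ) < γ - 1 by linarith)]
  set R : ℝ := deriv (fun z => g t z) y / g t y with hRdef
  rw [hπstar t y, ← hRdef]
  have hγa : (γ + a) ≠ 0 := by positivity
  have h1γ : (1 - γ) ≠ 0 := by intro h; linarith [h]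
  constructor
  · linarith [mul_nonneg_of_nonpos_of_nonpos hCnp hR2]
  · have h1 : C * R ≤ C * (-(b / κ)) := mul_le_mul_of_nonpos_left hR1 hCnp
    have h2 : C * (-(b / κ)) = ((1 - γ - a) * k * β * |ρ| * b) / ((γ + a) * (1 - γ) * κ) := by
      rw [abs_of_nonpos hρ.2, hC]
      field_simp
      try ring
    rw [hKπ]
    linarith [h1, h2]
end

section
/- Fix real constants b > 0, κ > 0, β̄ > 0, ν > 0, T > 0, δ > 0 and ψ ∈ ℝ, and additionally assume c₀ ≥ 0. Set d := √(κ² + 2bβ̄²), and for t ≤ s define B(t,s) := 2b(e^{d(s−t)} − 1)/((κ + d)e^{d(s−t)} − κ + d) and A(t,s) := (4bν/(κ² − d²))·[ln((κ+d)e^{ds} − (κ−d)e^{dt}) − ln(2d) − (1/2)((κ+d)s − (κ−d)t)] + c₀(s − t). Define g(t,y) := δ^ψ ∫_t^T e^{A(t,s) − B(t,s)y} ds for (t,y) ∈ [0,T) × [0,∞). Then for every (t,y) ∈ [0,T) × [0,∞): δ^ψ / g(t,y) ≤ 1/(T − t) + b y + (1/2) ν b (T − t). -/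
lemma aux_sinh (u : ℝ) (hu : 0 ≤ u) : Real.sinh u ≤ u * Real.cosh u := by
  have h : MonotoneOn (fun v : ℝ => v * Real.cosh v - Real.sinh v) (Set.Ici 0) := by
    apply monotoneOn_of_deriv_nonneg (convex_Ici 0)
    · exact ((continuous_id.mul Real.continuous_cosh).sub Real.continuous_sinh).continuousOn
    · intro x _
      exact (((differentiable_id.mul Real.differentiable_cosh).sub
        Real.differentiable_sinh) x).differentiableWithinAt
    · intro x hx
      rw [interior_Ici] at hx
      have hd : HasDerivAt (fun v : ℝ => v * Real.cosh v - Real.sinh v)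
          (1 * Real.cosh x + x * Real.sinh x - Real.cosh x) x :=
        ((hasDerivAt_id x).mul (Real.hasDerivAt_cosh x)).sub (Real.hasDerivAt_sinh x)
      rw [hd.deriv]
      have := Real.sinh_nonneg_iff.2 (le_of_lt hx)
      nlinarith [le_of_lt (Set.mem_Ioi.1 hx)]
  have := h (Set.self_mem_Ici) (Set.mem_Ici.2 hu) hu
  simpa using this

lemma aux_exp (x : ℝ) (hx : 0 ≤ x) : 2 * (Real.exp x - 1) ≤ x * (Real.exp x + 1) := by
  have h := aux_sinh (x / 2) (by linarith)
  rw [Real.sinh_eq, Real.cosh_eq] at h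
  have hE : Real.exp (x / 2) * Real.exp (x / 2) = Real.exp x := by
    rw [← Real.exp_add]; ring_nf
  have hEn : Real.exp (-(x / 2)) * Real.exp (x / 2) = 1 := by
    rw [← Real.exp_add]; simp
  nlinarith [Real.exp_pos (x / 2), Real.exp_pos (-(x / 2))]

lemma aux_G (κ d : ℝ) (hκ : 0 < κ) (hκd : κ < d) :
    ∀ τ : ℝ, 0 ≤ τ →
    Real.log ((κ + d) * Real.exp (d * τ) + d - κ) - Real.log (2 * d) - (κ + d) * τ / 2
      ≤ (d ^ 2 - κ ^ 2) * τ ^ 2 / 8 := by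
  have hdpos : 0 < d := hκ.trans hκd
  have hDpos : ∀ x : ℝ, 0 < (κ + d) * Real.exp (d * x) + d - κ := by
    intro x
    have := Real.exp_pos (d * x)
    nlinarith
  set H : ℝ → ℝ := fun x =>
    (d ^ 2 - κ ^ 2) * x ^ 2 / 8 + (κ + d) * x / 2 + Real.log (2 * d)
      - Real.log ((κ + d) * Real.exp (d * x) + d - κ) with hH
  have hDer : ∀ x : ℝ, HasDerivAt H
      ((d ^ 2 - κ ^ 2) * x / 4 + (κ + d) / 2
        - (κ + d) * Real.exp (d * x) * d / ((κ + d) * Real.exp (d * x) + d - κ)) x := by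
    intro x
    have h1 : HasDerivAt (fun x : ℝ => d * x) d x := by
      simpa using (hasDerivAt_id x).const_mul d
    have h2 : HasDerivAt (fun x : ℝ => (κ + d) * Real.exp (d * x) + d - κ)
        ((κ + d) * (Real.exp (d * x) * d)) x :=
      ((h1.exp.const_mul (κ + d)).add_const d).sub_const κ
    have h3 := h2.log (ne_of_gt (hDpos x))
    have h4 : HasDerivAt (fun x : ℝ => (d ^ 2 - κ ^ 2) * x ^ 2 / 8 + (κ + d) * x / 2
        + Real.log (2 * d)) ((d ^ 2 - κ ^ 2) * x / 4 + (κ + d) / 2) x := by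
      have hp : HasDerivAt (fun x : ℝ => x ^ 2) (2 * x) x := by
        simpa using hasDerivAt_pow 2 x
      have := (((hp.const_mul ((d ^ 2 - κ ^ 2) / 8)).add
        ((hasDerivAt_id x).const_mul ((κ + d) / 2)))).add_const (Real.log (2 * d))
      convert this using 2 <;> (try simp only [id_eq, Pi.add_apply]) <;> (try rfl) <;> ring
    have := h4.sub h3
    refine this.congr_deriv ?_
    field_simp
  have hmono : MonotoneOn H (Set.Ici 0) := by
    apply monotoneOn_of_deriv_nonneg (convex_Ici 0)
    · exact (fun x _ => (hDer x).differentiableAt.continuousAt.continuousWithinAt)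
    · exact fun x _ => (hDer x).differentiableAt.differentiableWithinAt
    · intro x hx
      rw [interior_Ici] at hx
      have hx0 : (0:ℝ) ≤ x := le_of_lt hx
      rw [(hDer x).deriv]
      have hD := hDpos x
      have key : (κ + d) * Real.exp (d * x) * d
          ≤ ((d ^ 2 - κ ^ 2) * x / 4 + (κ + d) / 2) * ((κ + d) * Real.exp (d * x) + d - κ) := by
        have haux := aux_exp (d * x) (by positivity)
        have hE1 : 1 ≤ Real.exp (d * x) := Real.one_le_exp (by positivity)
        nlinarith [mul_nonneg (mul_nonneg hx0 (sub_nonneg.2 hE1)) (mul_pos hκ hdpos).le,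
          mul_nonneg (sub_nonneg.2 haux) (sq_nonneg (d - κ)),
          mul_nonneg (mul_nonneg hx0 (sub_nonneg.2 hE1))
            (mul_nonneg hκ.le (sq_nonneg (d - κ)))]
      have hdiv : (κ + d) * Real.exp (d * x) * d / ((κ + d) * Real.exp (d * x) + d - κ)
          ≤ (d ^ 2 - κ ^ 2) * x / 4 + (κ + d) / 2 := by
        rw [div_le_iff₀ hD]; exact key
      linarith
  intro τ hτ
  have h0 : H 0 = 0 := by
    simp only [hH]
    norm_num
    rw [show κ + d + d - κ = 2 * d by ring, sub_self]
  have := hmono Set.self_mem_Ici (Set.mem_Ici.2 hτ) hτ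
  rw [h0] at this
  simp only [hH] at this
  linarith


lemma aux_pt (b κ β ν c₀ d y τ τ₀ : ℝ) (hb : 0 < b) (hκ : 0 < κ) (hβ : 0 < β) (hν : 0 < ν)
    (hc₀ : 0 ≤ c₀) (hy : 0 ≤ y) (hτ : 0 ≤ τ) (hττ₀ : τ ≤ τ₀)
    (hd2 : d ^ 2 = κ ^ 2 + 2 * b * β ^ 2) (hκd : κ < d) :
    -((b * y + 1 / 2 * ν * b * τ₀) * τ) ≤
      (4 * b * ν / (κ ^ 2 - d ^ 2)) * (Real.log ((κ + d) * Real.exp (d * τ) + d - κ)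
        - Real.log (2 * d) - (κ + d) * τ / 2) + c₀ * τ
      - (2 * b * (Real.exp (d * τ) - 1) / ((κ + d) * Real.exp (d * τ) - κ + d)) * y := by
  have hdpos : 0 < d := hκ.trans hκd
  have hE1 : 1 ≤ Real.exp (d * τ) := Real.one_le_exp (by positivity)
  have hDen : 0 < (κ + d) * Real.exp (d * τ) - κ + d := by
    nlinarith [Real.exp_pos (d * τ)]
  have hG := aux_G κ d hκ hκd τ hτ
  have hk1 : κ ^ 2 - d ^ 2 = -(2 * b * β ^ 2) := by rw [hd2]; ring
  have hk2 : d ^ 2 - κ ^ 2 = 2 * b * β ^ 2 := by rw [hd2]; ring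
  have hC : 4 * b * ν / (κ ^ 2 - d ^ 2) < 0 := by
    apply div_neg_of_pos_of_neg (by positivity)
    rw [hk1]
    have := mul_pos hb (pow_pos hβ 2)
    linarith
  have hCA := mul_le_mul_of_nonpos_left hG hC.le
  have hCval : (4 * b * ν / (κ ^ 2 - d ^ 2)) * ((d ^ 2 - κ ^ 2) * τ ^ 2 / 8)
      = -(ν * b * τ ^ 2 / 2) := by
    rw [hk1, hk2]
    have hβ0 : β ≠ 0 := ne_of_gt hβ
    have hb0 : b ≠ 0 := ne_of_gt hb
    field_simp
    ring
  have hBle : 2 * b * (Real.exp (d * τ) - 1)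
      / ((κ + d) * Real.exp (d * τ) - κ + d) ≤ b * τ := by
    rw [div_le_iff₀ hDen]
    have haux := aux_exp (d * τ) (by positivity)
    have hid : b * τ * ((κ + d) * Real.exp (d * τ) - κ + d)
        = b * (κ * (τ * (Real.exp (d * τ) - 1))) + b * ((d * τ) * (Real.exp (d * τ) + 1)) := by
      ring
    have h1 : 0 ≤ b * (κ * (τ * (Real.exp (d * τ) - 1))) := by
      have : 0 ≤ τ * (Real.exp (d * τ) - 1) := mul_nonneg hτ (by linarith)
      positivity
    have h2 : b * (2 * (Real.exp (d * τ) - 1)) ≤ b * ((d * τ) * (Real.exp (d * τ) + 1)) :=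
      mul_le_mul_of_nonneg_left haux hb.le
    linarith
  have hBy : 2 * b * (Real.exp (d * τ) - 1)
      / ((κ + d) * Real.exp (d * τ) - κ + d) * y ≤ b * τ * y :=
    mul_le_mul_of_nonneg_right hBle hy
  have hc₀τ : 0 ≤ c₀ * τ := mul_nonneg hc₀ hτ
  nlinarith [mul_nonneg (mul_nonneg (mul_pos hν hb).le hτ) (sub_nonneg.2 hττ₀)]

/-- Bound on the candidate optimal consumption–wealth ratio in the robust
consumption–portfolio problem for the Heston model (case `c₀ ≥ 0`):
`δ^ψ/g(t,y) ≤ 1/(T−t) + by + ½νb(T−t)` on `[0,T) × [0,∞)`. -/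
theorem heston_consumption_wealth_ratio_bound
    (b κ β ν c₀ T δ ψ : ℝ)
    (hb : 0 < b) (hκ : 0 < κ) (hβ : 0 < β) (hν : 0 < ν) (hT : 0 < T) (hδ : 0 < δ)
    (hc₀ : 0 ≤ c₀)
    (d : ℝ) (hd : d = Real.sqrt (κ ^ 2 + 2 * b * β ^ 2))
    (B A : ℝ → ℝ → ℝ)
    (hB : ∀ t s : ℝ, t ≤ s → B t s = 2 * b * (Real.exp (d * (s - t)) - 1)
      / ((κ + d) * Real.exp (d * (s - t)) - κ + d))
    (hA : ∀ t s : ℝ, t ≤ s →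
      A t s = (4 * b * ν / (κ ^ 2 - d ^ 2)) *
        (Real.log ((κ + d) * Real.exp (d * s) - (κ - d) * Real.exp (d * t))
          - Real.log (2 * d) - (1 / 2) * ((κ + d) * s - (κ - d) * t))
      + c₀ * (s - t))
    (g : ℝ → ℝ → ℝ)
    (hg : ∀ t y : ℝ, g t y = δ ^ ψ * ∫ s in t..T, Real.exp (A t s - B t s * y)) :
    ∀ t ∈ Set.Ico (0 : ℝ) T, ∀ y ∈ Set.Ici (0 : ℝ),
      δ ^ ψ / g t y ≤ 1 / (T - t) + b * y + (1 / 2) * ν * b * (T - t) := by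
  intro t ht y hy
  obtain ⟨ht0, htT⟩ := ht
  rw [Set.mem_Ici] at hy
  -- basic parameter facts
  have hβ2 : (0:ℝ) < κ ^ 2 + 2 * b * β ^ 2 := by positivity
  have hd2 : d ^ 2 = κ ^ 2 + 2 * b * β ^ 2 := by rw [hd]; exact Real.sq_sqrt hβ2.le
  have hκd : κ < d := by
    rw [hd]
    refine (Real.lt_sqrt hκ.le).2 ?_
    nlinarith [mul_pos hb (pow_pos hβ 2)]
  have hdpos : 0 < d := hκ.trans hκd
  have hκ2d2 : κ ^ 2 - d ^ 2 = -(2 * b * β ^ 2) := by rw [hd2]; ring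
  set τ₀ := T - t with hτ₀
  have hτ₀pos : 0 < τ₀ := by simp only [hτ₀]; linarith
  set M := b * y + 1 / 2 * ν * b * τ₀ with hM
  clear_value τ₀ M
  have hMpos : 0 < M := by
    rw [hM]
    have h1 : 0 ≤ b * y := mul_nonneg hb.le hy
    nlinarith [mul_pos (mul_pos hν hb) hτ₀pos]
  have hDen : ∀ x : ℝ, 0 < (κ + d) * Real.exp x - κ + d := by
    intro x
    nlinarith [Real.exp_pos x]
  have hlogpos : ∀ s : ℝ, 0 < (κ + d) * Real.exp (d * s) - (κ - d) * Real.exp (d * t) := by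
    intro s
    nlinarith [Real.exp_pos (d * s), Real.exp_pos (d * t)]
  set Φ : ℝ → ℝ := fun s => Real.exp ((4 * b * ν / (κ ^ 2 - d ^ 2)) *
      (Real.log ((κ + d) * Real.exp (d * s) - (κ - d) * Real.exp (d * t))
        - Real.log (2 * d) - (1 / 2) * ((κ + d) * s - (κ - d) * t))
      + c₀ * (s - t)
      - (2 * b * (Real.exp (d * (s - t)) - 1)
          / ((κ + d) * Real.exp (d * (s - t)) - κ + d)) * y) with hΦ
  clear_value Φ
  have hEqOn : Set.EqOn (fun s => Real.exp (A t s - B t s * y)) Φ (Set.uIcc t T) := by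
    intro s hs
    rw [Set.uIcc_of_le htT.le] at hs
    simp only [hΦ]
    rw [hA t s hs.1, hB t s hs.1]
  have hI : (∫ s in t..T, Real.exp (A t s - B t s * y)) = ∫ s in t..T, Φ s :=
    intervalIntegral.integral_congr hEqOn
  -- continuity of Φ
  have hcont : Continuous Φ := by
    rw [hΦ]
    apply Continuous.rexp
    have c2 : Continuous fun s : ℝ =>
        Real.log ((κ + d) * Real.exp (d * s) - (κ - d) * Real.exp (d * t)) := by
      apply Continuous.log (by fun_prop)
      exact fun s => ne_of_gt (hlogpos s)
    have c3 : Continuous fun s : ℝ => 2 * b * (Real.exp (d * (s - t)) - 1)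
        / ((κ + d) * Real.exp (d * (s - t)) - κ + d) := by
      apply Continuous.div (by fun_prop) (by fun_prop)
      exact fun s => ne_of_gt (hDen (d * (s - t)))
    apply Continuous.sub
    · apply Continuous.add
      · exact continuous_const.mul ((c2.sub continuous_const).sub (by fun_prop))
      · fun_prop
    · exact c3.mul continuous_const
  have hint1 : IntervalIntegrable Φ MeasureTheory.volume t T :=
    hcont.intervalIntegrable t T
  have hint2 : IntervalIntegrable (fun s => Real.exp (-(M * (s - t))))
      MeasureTheory.volume t T := by
    apply Continuous.intervalIntegrable
    fun_prop
  -- pointwise lower bound on the integrand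
  have hpt : ∀ s ∈ Set.Icc t T, Real.exp (-(M * (s - t))) ≤ Φ s := by
    intro s hs
    have hτnn : 0 ≤ s - t := by linarith [hs.1]
    have hττ₀ : s - t ≤ τ₀ := by simp only [hτ₀]; linarith [hs.2]
    simp only [hΦ]
    apply Real.exp_le_exp.2
    have hDarg : 0 < (κ + d) * Real.exp (d * (s - t)) + d - κ := by
      nlinarith [Real.exp_pos (d * (s - t))]
    have hsplit : (κ + d) * Real.exp (d * s) - (κ - d) * Real.exp (d * t)
        = Real.exp (d * t) * ((κ + d) * Real.exp (d * (s - t)) + d - κ) := by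
      rw [show d * s = d * t + d * (s - t) by ring, Real.exp_add]; ring
    have hlog : Real.log ((κ + d) * Real.exp (d * s) - (κ - d) * Real.exp (d * t))
        = d * t + Real.log ((κ + d) * Real.exp (d * (s - t)) + d - κ) := by
      rw [hsplit, Real.log_mul (ne_of_gt (Real.exp_pos _)) (ne_of_gt hDarg), Real.log_exp]
    rw [hlog]
    have hlin : (4 * b * ν / (κ ^ 2 - d ^ 2)) *
        (d * t + Real.log ((κ + d) * Real.exp (d * (s - t)) + d - κ)
          - Real.log (2 * d) - (1 / 2) * ((κ + d) * s - (κ - d) * t))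
        = (4 * b * ν / (κ ^ 2 - d ^ 2)) *
          (Real.log ((κ + d) * Real.exp (d * (s - t)) + d - κ)
            - Real.log (2 * d) - (κ + d) * (s - t) / 2) := by
      ring
    rw [hlin, hM]
    exact aux_pt b κ β ν c₀ d y (s - t) τ₀ hb hκ hβ hν hc₀ hy hτnn hττ₀ hd2 hκd
  have hmono := intervalIntegral.integral_mono_on htT.le hint2 hint1 hpt
  -- compute the comparison integral
  have hJ : (∫ s in t..T, Real.exp (-(M * (s - t))))
      = (1 - Real.exp (-(M * τ₀))) / M := by
    have hF : ∀ s : ℝ, HasDerivAt (fun u => -Real.exp (-(M * (u - t))) / M)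
        (Real.exp (-(M * (s - t)))) s := by
      intro s
      have h1 : HasDerivAt (fun u : ℝ => -(M * (u - t))) (-M) s := by
        have := ((hasDerivAt_id s).sub_const t).const_mul M
        simpa [Pi.neg_def] using this.neg
      have h2 := ((h1.exp).neg).div_const M
      convert h2 using 1 <;> (try rfl)
      field_simp
    rw [intervalIntegral.integral_eq_sub_of_hasDerivAt (fun s _ => hF s) hint2]
    simp only [hτ₀]
    rw [sub_self, mul_zero, neg_zero, Real.exp_zero]
    field_simp
    ring
  rw [hJ] at hmono
  have hElt : Real.exp (-(M * τ₀)) < 1 := by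
    apply Real.exp_lt_one_iff.2
    nlinarith
  have hJpos : 0 < (1 - Real.exp (-(M * τ₀))) / M := by
    apply div_pos (by linarith) hMpos
  have hIpos : 0 < ∫ s in t..T, Φ s := lt_of_lt_of_le hJpos hmono
  -- rewrite the quotient
  have hδψ : 0 < δ ^ ψ := Real.rpow_pos_of_pos hδ ψ
  rw [hg, hI, div_mul_eq_div_div, div_self (ne_of_gt hδψ)]
  have h1I : 1 / (∫ s in t..T, Φ s) ≤ 1 / ((1 - Real.exp (-(M * τ₀))) / M) :=
    one_div_le_one_div_of_le hJpos hmono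
  have h1J : 1 / ((1 - Real.exp (-(M * τ₀))) / M) = M / (1 - Real.exp (-(M * τ₀))) :=
    one_div_div _ _
  have hfin : M / (1 - Real.exp (-(M * τ₀))) ≤ 1 / τ₀ + M := by
    rw [div_le_iff₀ (by linarith : 0 < 1 - Real.exp (-(M * τ₀)))]
    have hx := Real.add_one_le_exp (M * τ₀)
    have hEpos := Real.exp_pos (-(M * τ₀))
    have hEinv : Real.exp (-(M * τ₀)) * Real.exp (M * τ₀) = 1 := by
      rw [← Real.exp_add]; simp
    have hEle : Real.exp (-(M * τ₀)) * (M * τ₀ + 1) ≤ 1 := by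
      calc Real.exp (-(M * τ₀)) * (M * τ₀ + 1)
          ≤ Real.exp (-(M * τ₀)) * Real.exp (M * τ₀) :=
            mul_le_mul_of_nonneg_left hx hEpos.le
        _ = 1 := hEinv
    rw [← sub_nonneg]
    have expand : (1 / τ₀ + M) * (1 - Real.exp (-(M * τ₀))) - M
        = (1 - Real.exp (-(M * τ₀)) * (M * τ₀ + 1)) / τ₀ := by
      field_simp
      ring
    rw [expand]
    exact div_nonneg (by linarith) hτ₀pos.le
  have : 1 / τ₀ + M = 1 / (T - t) + b * y + 1 / 2 * ν * b * (T - t) := by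
    simp only [hM, hτ₀]; ring
  linarith [h1J ▸ h1I]
end

section
/- Let γ > 1, ψ > 1 and δ > 0 be real numbers, set φ := 1/ψ and θ := (1−γ)/(1−φ), and for c > 0 and v < 0 define the Epstein–Zin aggregator f(c,v) := δθ v [ (c / ((1−γ)v)^{1/(1−γ)})^{1−φ} − 1 ] (well defined since (1−γ)v > 0). Then for every c > 0 and all v₁, v₂ with v₂ ≤ v₁ < 0: f(c, v₁) − f(c, v₂) ≤ δ|θ| (v₁ − v₂). -/
/-- Monotonicity condition (A3) for the continuous-time Epstein–Zin aggregator in the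
case `γ > 1`, `ψ > 1`: for `c > 0` and `v₂ ≤ v₁ < 0`,
`f(c, v₁) − f(c, v₂) ≤ δ|θ|(v₁ − v₂)`. -/
theorem epstein_zin_monotonicity
    (γ ψ δ : ℝ) (hγ : 1 < γ) (hψ : 1 < ψ) (hδ : 0 < δ)
    (φ θ : ℝ) (hφ : φ = 1 / ψ) (hθ : θ = (1 - γ) / (1 - φ))
    (f : ℝ → ℝ → ℝ)
    (hf : ∀ c v : ℝ, 0 < c → v < 0 →
      f c v = δ * θ * v * ((c / ((1 - γ) * v) ^ (1 / (1 - γ))) ^ (1 - φ) - 1)) :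
    ∀ c : ℝ, 0 < c → ∀ v₁ v₂ : ℝ, v₂ ≤ v₁ → v₁ < 0 →
      f c v₁ - f c v₂ ≤ δ * |θ| * (v₁ - v₂) := by
  intro c hc v₁ v₂ h12 h1
  have h2 : v₂ < 0 := lt_of_le_of_lt h12 h1
  have hψ0 : (0:ℝ) < ψ := lt_trans one_pos hψ
  have hφ0 : 0 < φ := by rw [hφ]; positivity
  have hφ1 : φ < 1 := by rw [hφ, div_lt_one hψ0]; exact hψ
  set p : ℝ := 1 - φ with hp
  have hp0 : 0 < p := by simp only [hp]; linarith
  set a : ℝ := 1 - γ with ha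
  have ha0 : a < 0 := by simp only [ha]; linarith
  have hθ' : θ = a / p := hθ
  have hθneg : θ < 0 := by rw [hθ']; exact div_neg_of_neg_of_pos ha0 hp0
  have habs : |θ| = -θ := abs_of_neg hθneg
  set q : ℝ := 1 - p / a with hq
  have hq0 : 0 < q := by
    have : p / a < 0 := div_neg_of_pos_of_neg hp0 ha0
    simp only [hq]; linarith
  have key : ∀ v : ℝ, v < 0 →
      f c v = (δ / p) * c ^ p * (a * v) ^ q - δ * θ * v := by
    intro v hv
    have hX : 0 < a * v := mul_pos_of_neg_of_neg ha0 hv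
    rw [hf c v hc hv]
    have e1 : (c / (a * v) ^ (1 / a)) ^ p = c ^ p * ((a * v) ^ (p / a))⁻¹ := by
      rw [Real.div_rpow hc.le (Real.rpow_nonneg hX.le _), ← Real.rpow_mul hX.le,
        div_eq_mul_inv]
      have : 1 / a * p = p / a := by ring
      rw [this]
    have e2 : (a * v) ^ q = (a * v) * ((a * v) ^ (p / a))⁻¹ := by
      rw [hq, sub_eq_add_neg, Real.rpow_add hX, Real.rpow_one, Real.rpow_neg hX.le]
    have hY : ((a * v) ^ (p / a))⁻¹ ≠ 0 := by
      positivity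
    rw [e1, e2, hθ']
    field_simp
  rw [key v₁ h1, key v₂ h2, habs]
  have hX1 : 0 < a * v₁ := mul_pos_of_neg_of_neg ha0 h1
  have hle : a * v₁ ≤ a * v₂ := mul_le_mul_of_nonpos_left h12 ha0.le
  have hmono : (a * v₁) ^ q ≤ (a * v₂) ^ q :=
    Real.rpow_le_rpow hX1.le hle hq0.le
  have hcp : 0 < c ^ p := Real.rpow_pos_of_pos hc p
  have hdp : 0 < δ / p := div_pos hδ hp0
  nlinarith [mul_le_mul_of_nonneg_left hmono (le_of_lt (mul_pos hdp hcp))]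
end

section
/- Fix real constants b > 0, κ > 0, β̄ > 0, ν > 0, c₀ ∈ ℝ, T > 0, δ > 0 and ψ ∈ ℝ, set d := √(κ² + 2bβ̄²), and for t ≤ s define B(t,s) := 2b(e^{d(s−t)} − 1)/((κ + d)e^{d(s−t)} − κ + d) and A(t,s) := (4bν/(κ² − d²))·[ln((κ+d)e^{ds} − (κ−d)e^{dt}) − ln(2d) − (1/2)((κ+d)s − (κ−d)t)] + c₀(s − t). Define g(t,y) := δ^ψ ∫_t^T e^{A(t,s) − B(t,s)y} ds for (t,y) ∈ [0,T) × [0,∞). Then for every (t,y) ∈ [0,T) × [0,∞): 0 < g(t,y) ≤ δ^ψ e^{|c₀| T} (T − t). -/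
/-- Positivity and upper bound for the explicit value-function factor `g` in the
Heston model: `0 < g(t,y) ≤ δ^ψ e^{|c₀|T}(T−t)` on `[0,T) × [0,∞)`. -/
theorem heston_g_bounds
    (b κ β ν c₀ T δ ψ : ℝ)
    (hb : 0 < b) (hκ : 0 < κ) (hβ : 0 < β) (hν : 0 < ν) (hT : 0 < T) (hδ : 0 < δ)
    (d : ℝ) (hd : d = Real.sqrt (κ ^ 2 + 2 * b * β ^ 2))
    (B A : ℝ → ℝ → ℝ)
    (hB : ∀ t s : ℝ, t ≤ s → B t s = 2 * b * (Real.exp (d * (s - t)) - 1)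
      / ((κ + d) * Real.exp (d * (s - t)) - κ + d))
    (hA : ∀ t s : ℝ, t ≤ s →
      A t s = (4 * b * ν / (κ ^ 2 - d ^ 2)) *
        (Real.log ((κ + d) * Real.exp (d * s) - (κ - d) * Real.exp (d * t))
          - Real.log (2 * d) - (1 / 2) * ((κ + d) * s - (κ - d) * t))
      + c₀ * (s - t))
    (g : ℝ → ℝ → ℝ)
    (hg : ∀ t y : ℝ, g t y = δ ^ ψ * ∫ s in t..T, Real.exp (A t s - B t s * y)) :
    ∀ t ∈ Set.Ico (0 : ℝ) T, ∀ y ∈ Set.Ici (0 : ℝ),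
      0 < g t y ∧ g t y ≤ δ ^ ψ * Real.exp (|c₀| * T) * (T - t) := by
  have hd2 : d ^ 2 = κ ^ 2 + 2 * b * β ^ 2 := by
    rw [hd]; exact Real.sq_sqrt (by positivity)
  have hd0 : 0 < d := by
    rw [hd]; exact Real.sqrt_pos.mpr (by positivity)
  have hκd : κ < d := by
    have h1 : κ ^ 2 < d ^ 2 := by nlinarith [mul_pos hb (pow_pos hβ 2)]
    nlinarith
  rintro t ⟨ht0, htT⟩ y hy
  simp only [Set.mem_Ici] at hy
  -- pointwise bound on A
  have hApt : ∀ s : ℝ, t ≤ s → s ≤ T → A t s ≤ |c₀| * T := by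
    intro s hts hsT
    rw [hA t s hts]
    set X : ℝ := (κ + d) * Real.exp (d * s) - (κ - d) * Real.exp (d * t) with hXdef
    have hes := Real.exp_pos (d * s)
    have het := Real.exp_pos (d * t)
    have hX : 0 < X := by
      have : 0 < (κ + d) * Real.exp (d * s) := by positivity
      nlinarith
    -- Jensen / convexity of exp
    have hJ : 2 * d * Real.exp ((1 / 2) * ((κ + d) * s - (κ - d) * t)) ≤ X := by
      have ha : (0:ℝ) ≤ (d + κ) / (2 * d) := by positivity
      have hb' : (0:ℝ) ≤ (d - κ) / (2 * d) := by
        apply div_nonneg (by linarith) (by positivity)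
      have hab : (d + κ) / (2 * d) + (d - κ) / (2 * d) = 1 := by
        field_simp; ring
      have hconv := convexOn_exp.2 (Set.mem_univ (d * s)) (Set.mem_univ (d * t)) ha hb' hab
      simp only [smul_eq_mul] at hconv
      have harg : (d + κ) / (2 * d) * (d * s) + (d - κ) / (2 * d) * (d * t)
          = (1 / 2) * ((κ + d) * s - (κ - d) * t) := by
        field_simp; ring
      rw [harg] at hconv
      have h2d : (0:ℝ) < 2 * d := by positivity
      calc 2 * d * Real.exp ((1 / 2) * ((κ + d) * s - (κ - d) * t))
          ≤ 2 * d * ((d + κ) / (2 * d) * Real.exp (d * s)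
              + (d - κ) / (2 * d) * Real.exp (d * t)) := by
            exact mul_le_mul_of_nonneg_left hconv h2d.le
        _ = X := by field_simp [hXdef]; ring
    have hbr : 0 ≤ Real.log X - Real.log (2 * d)
        - (1 / 2) * ((κ + d) * s - (κ - d) * t) := by
      have hlog : Real.log (2 * d) + (1 / 2) * ((κ + d) * s - (κ - d) * t)
          ≤ Real.log X := by
        rw [Real.le_log_iff_exp_le hX, Real.exp_add, Real.exp_log (by positivity)]
        exact hJ
      linarith
    have hcoef : 4 * b * ν / (κ ^ 2 - d ^ 2) ≤ 0 := by
      apply le_of_lt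
      apply div_neg_of_pos_of_neg (by positivity)
      nlinarith
    have hterm1 : 4 * b * ν / (κ ^ 2 - d ^ 2) *
        (Real.log X - Real.log (2 * d)
          - (1 / 2) * ((κ + d) * s - (κ - d) * t)) ≤ 0 :=
      mul_nonpos_iff.mpr (Or.inr ⟨hcoef, hbr⟩)
    have hterm2 : c₀ * (s - t) ≤ |c₀| * T := by
      have h1 : c₀ * (s - t) ≤ |c₀| * (s - t) :=
        mul_le_mul_of_nonneg_right (le_abs_self c₀) (by linarith)
      have h2 : |c₀| * (s - t) ≤ |c₀| * T :=
        mul_le_mul_of_nonneg_left (by linarith) (abs_nonneg c₀)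
      linarith
    linarith
  -- pointwise nonnegativity of B
  have hBpt : ∀ s : ℝ, t ≤ s → 0 ≤ B t s := by
    intro s hts
    rw [hB t s hts]
    have he : 1 ≤ Real.exp (d * (s - t)) :=
      Real.one_le_exp (mul_nonneg hd0.le (by linarith))
    apply div_nonneg
    · nlinarith
    · nlinarith
  -- explicit continuous integrand
  set F : ℝ → ℝ := fun s => Real.exp
      ((4 * b * ν / (κ ^ 2 - d ^ 2)) *
        (Real.log ((κ + d) * Real.exp (d * s) - (κ - d) * Real.exp (d * t))
          - Real.log (2 * d) - (1 / 2) * ((κ + d) * s - (κ - d) * t))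
      + c₀ * (s - t)
      - 2 * b * (Real.exp (d * (s - t)) - 1)
        / ((κ + d) * Real.exp (d * (s - t)) - κ + d) * y) with hFdef
  have hXne : ∀ s : ℝ, (κ + d) * Real.exp (d * s) - (κ - d) * Real.exp (d * t) ≠ 0 := by
    intro s
    have hes := Real.exp_pos (d * s)
    have het := Real.exp_pos (d * t)
    have h1 : 0 < (κ + d) * Real.exp (d * s) := by positivity
    exact ne_of_gt (by nlinarith)
  have hDne : ∀ s : ℝ, (κ + d) * Real.exp (d * (s - t)) - κ + d ≠ 0 := by
    intro s
    have he := Real.exp_pos (d * (s - t))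
    have h1 : 0 < (κ + d) * Real.exp (d * (s - t)) := by positivity
    exact ne_of_gt (by nlinarith)
  have cX : Continuous fun s : ℝ => (κ + d) * Real.exp (d * s) - (κ - d) * Real.exp (d * t) :=
    (continuous_const.mul (Real.continuous_exp.comp
      (continuous_const.mul continuous_id))).sub continuous_const
  have cE : Continuous fun s : ℝ => Real.exp (d * (s - t)) :=
    Real.continuous_exp.comp (continuous_const.mul (continuous_id.sub continuous_const))
  have hFcont : Continuous F := by
    apply Real.continuous_exp.comp
    apply Continuous.sub
    · apply Continuous.add
      · exact continuous_const.mul (((cX.log hXne).sub continuous_const).sub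
          (continuous_const.mul ((continuous_const.mul continuous_id).sub continuous_const)))
      · exact continuous_const.mul (continuous_id.sub continuous_const)
    · exact ((continuous_const.mul (cE.sub continuous_const)).div
        (((continuous_const.mul cE).sub continuous_const).add continuous_const)
        hDne).mul continuous_const
  have hFeq : Set.EqOn (fun s => Real.exp (A t s - B t s * y)) F (Set.uIcc t T) := by
    intro s hs
    rw [Set.uIcc_of_le htT.le] at hs
    obtain ⟨hts, hsT⟩ := hs
    simp only [hFdef]
    rw [hA t s hts, hB t s hts]
  have hint : (∫ s in t..T, Real.exp (A t s - B t s * y)) = ∫ s in t..T, F s :=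
    intervalIntegral.integral_congr hFeq
  have hFint : IntervalIntegrable F MeasureTheory.volume t T :=
    hFcont.intervalIntegrable t T
  have hδψ : (0:ℝ) < δ ^ ψ := Real.rpow_pos_of_pos hδ ψ
  constructor
  · -- positivity
    rw [hg, hint]
    apply mul_pos hδψ
    apply intervalIntegral.intervalIntegral_pos_of_pos hFint _ htT
    intro x
    exact Real.exp_pos _
  · -- upper bound
    rw [hg, hint]
    have hle : ∫ s in t..T, F s ≤ ∫ _s in t..T, Real.exp (|c₀| * T) := by
      apply intervalIntegral.integral_mono_on htT.le hFint
        (intervalIntegrable_const)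
      intro s hs
      obtain ⟨hts, hsT⟩ := hs
      have : F s = Real.exp (A t s - B t s * y) := by
        rw [hFdef]; simp only; rw [hA t s hts, hB t s hts]
      rw [this]
      apply Real.exp_le_exp.mpr
      have hB0 := hBpt s hts
      have hA0 := hApt s hts hsT
      nlinarith
    rw [intervalIntegral.integral_const, smul_eq_mul] at hle
    calc δ ^ ψ * ∫ s in t..T, F s ≤ δ ^ ψ * ((T - t) * Real.exp (|c₀| * T)) :=
          mul_le_mul_of_nonneg_left hle hδψ.le
      _ = δ ^ ψ * Real.exp (|c₀| * T) * (T - t) := by ring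
end
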